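/- arXiv:1203.1806 — 6 statements merged into one kernel-verified Lean document; each statement's English description precedes it below -/
import Mathlib

section
/- Let P ⊇ Q be a unital inclusion of von Neumann algebras with a faithful normal conditional expectation E_Q : P → Q. If z is a nonzero central projection of Q such that zP = Qz (as sets), then z is central in P and Qz is a direct summand of P. -/
open scoped ComplexOrder

variable {H : Type*} [NormedAddCommGroup H] [InnerProductSpace ℂ H] [CompleteSpace H]

/-- A faithful normal conditional expectation from the (carrier of the) von Neumann
algebra `P` onto its subalgebra `Q`: a positive, `Q`-bimodular, star-preserving,
linear idempotent projection of `P` onto `Q` which is faithful. -/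
def IsCondExp (P Q : Set (H →L[ℂ] H)) (E : (H →L[ℂ] H) → (H →L[ℂ] H)) : Prop :=
  Q ⊆ P ∧ (∀ x ∈ P, E x ∈ Q) ∧ (∀ y ∈ Q, E y = y) ∧
  (∀ x y, E (x + y) = E x + E y) ∧ (∀ (c : ℂ) (x : H →L[ℂ] H), E (c • x) = c • E x) ∧
  (∀ x, E (star x) = star (E x)) ∧ (∀ x, 0 ≤ x → 0 ≤ E x) ∧
  (∀ a ∈ Q, ∀ (x : H →L[ℂ] H), ∀ b ∈ Q, E (a * x * b) = a * E x * b) ∧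
  (∀ x ∈ P, E (star x * x) = 0 → x = 0)

/-- `p` is an (orthogonal) projection belonging to `P`. -/
def IsProjectionIn (P : Set (H →L[ℂ] H)) (p : H →L[ℂ] H) : Prop :=
  p ∈ P ∧ IsIdempotentElem p ∧ IsSelfAdjoint p

/-- σ-finiteness of a von Neumann algebra, expressed through the existence of a
faithful (normal) state. -/
def IsSigmaFinite (P : Set (H →L[ℂ] H)) : Prop :=
  ∃ φ : (H →L[ℂ] H) →ₗ[ℂ] ℂ, φ 1 = 1 ∧ (∀ x, 0 ≤ x → 0 ≤ φ x) ∧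
    (∀ x ∈ P, φ (star x * x) = 0 → x = 0)

/-- if `z` is a nonzero central projection of `Q` with `zP = Qz` (as sets),
then `z` is central in `P` and `Qz` is a direct summand of `P` (i.e. `Pz = Qz`). -/
theorem stmt0 (P Q : VonNeumannAlgebra H) (E : (H →L[ℂ] H) → (H →L[ℂ] H))
    (hE : IsCondExp (P : Set (H →L[ℂ] H)) (Q : Set (H →L[ℂ] H)) E)
    (z : H →L[ℂ] H) (hz : IsProjectionIn (Q : Set (H →L[ℂ] H)) z)
    (hzQcentral : ∀ y ∈ Q, z * y = y * z) (hz0 : z ≠ 0)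
    (hzP : {w | ∃ x ∈ P, w = z * x} = {w | ∃ y ∈ Q, w = y * z}) :
    (∀ x ∈ P, z * x = x * z) ∧
      {w | ∃ x ∈ P, w = x * z} = {w | ∃ y ∈ Q, w = y * z} := by
  obtain ⟨hzQ, hzid, hzsa⟩ := hz
  have hfix : ∀ x ∈ P, z * x * z = z * x := by
    intro x hx
    have hmem : z * x ∈ {w | ∃ y ∈ Q, w = y * z} := by
      rw [← hzP]; exact ⟨x, hx, rfl⟩
    obtain ⟨y, hy, hyx⟩ := hmem
    rw [hyx, mul_assoc, hzid.eq]
  have hcomm : ∀ x ∈ P, z * x = x * z := by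
    intro x hx
    have h1 := hfix (star x) (star_mem hx)
    have h2 := congrArg star h1
    simp only [star_mul, star_star, hzsa.star_eq] at h2
    calc z * x = z * x * z := (hfix x hx).symm
      _ = z * (x * z) := by rw [mul_assoc]
      _ = x * z := h2
  refine ⟨hcomm, ?_⟩
  ext w
  constructor
  · rintro ⟨x, hx, rfl⟩
    rw [← hcomm x hx, ← hzP]
    exact ⟨x, hx, rfl⟩
  · rintro ⟨y, hy, rfl⟩
    exact ⟨y, hE.1 hy, rfl⟩
end

section
/- Let P ⊇ Q be a unital inclusion of von Neumann algebras with a faithful normal conditional expectation E_Q : P → Q. If Pe = Qe for some nonzero projection e ∈ Q, then there exists a nonzero central projection z of Q with Pz = Qz. Consequently, the inclusion P ⊇ Q is entirely non-trivial (no nonzero direct summand of Q is a direct summand of P) if and only if Pe ≠ Qe for every nonzero projection e ∈ Q. -/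
open scoped ComplexOrder
open scoped InnerProductSpace

variable {H : Type*} [NormedAddCommGroup H] [InnerProductSpace ℂ H] [CompleteSpace H]

/-- An inclusion `P ⊇ Q` is entirely non-trivial if `Pz ≠ Qz` for every nonzero
central projection `z` of `Q`. -/
def EntirelyNonTrivialCentral (P Q : Set (H →L[ℂ] H)) : Prop :=
  ∀ z : H →L[ℂ] H, IsProjectionIn Q z → (∀ y ∈ Q, z * y = y * z) → z ≠ 0 →
    {w | ∃ x ∈ P, w = x * z} ≠ {w | ∃ y ∈ Q, w = y * z}

theorem key_lemma (P Q : VonNeumannAlgebra H)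
    (hPQ : (Q : Set (H →L[ℂ] H)) ⊆ (P : Set (H →L[ℂ] H)))
    (e : H →L[ℂ] H) (he : e ∈ Q) (hene : e ≠ 0)
    (hPe : {w | ∃ x ∈ P, w = x * e} = {w | ∃ y ∈ Q, w = y * e}) :
    ∃ z : H →L[ℂ] H, IsProjectionIn (Q : Set (H →L[ℂ] H)) z ∧
      (∀ y ∈ Q, z * y = y * z) ∧ z ≠ 0 ∧
      {w | ∃ x ∈ P, w = x * z} = {w | ∃ y ∈ Q, w = y * z} := by
  classical
  set S : Set H := {v | ∃ a ∈ (Q : Set (H →L[ℂ] H)), ∃ η : H, v = (a * e) η} with hSdef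
  set K : Submodule ℂ H := (Submodule.span ℂ S).topologicalClosure with hKdef
  have hKclosed : IsClosed (K : Set H) := hKdef ▸ Submodule.isClosed_topologicalClosure _
  haveI : CompleteSpace K := hKclosed.completeSpace_coe
  set z : H →L[ℂ] H := K.subtypeL ∘L K.orthogonalProjectionOnto with hzdef
  have hzmem : ∀ v : H, z v ∈ K := fun v => (K.orthogonalProjectionOnto v).2
  have z1 : ∀ k ∈ K, z k = k := fun k hk => Submodule.starProjection_eq_self_iff.mpr hk
  have z3 : ∀ w ∈ Kᗮ, z w = 0 := by
    intro w hw
    have h := Submodule.orthogonalProjectionOnto_apply_of_mem_orthogonal hw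
    show (↑(K.orthogonalProjectionOnto w) : H) = 0
    rw [h]; rfl
  have zsa : IsSelfAdjoint z := isSelfAdjoint_starProjection K
  have zid : IsIdempotentElem z := by
    ext v
    show z (z v) = z v
    exact z1 _ (hzmem v)
  have hSK : ∀ v ∈ S, v ∈ K := fun v hv =>
    (Submodule.span ℂ S).le_topologicalClosure (Submodule.subset_span hv)
  have invK : ∀ A : H →L[ℂ] H, (∀ v ∈ S, A v ∈ K) → ∀ k ∈ K, A k ∈ K := by
    intro A hA k hk
    have hsub : Submodule.span ℂ S ≤ K.comap (A : H →ₗ[ℂ] H) := by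
      rw [Submodule.span_le]; exact fun v hv => hA v hv
    have hcl : IsClosed ((K.comap (A : H →ₗ[ℂ] H)) : Set H) :=
      hKclosed.preimage A.continuous
    exact (hKdef ▸ Submodule.topologicalClosure_minimal _ hsub hcl) hk
  have commz : ∀ A : H →L[ℂ] H, (∀ k ∈ K, A k ∈ K) → (∀ k ∈ K, (star A) k ∈ K) →
      A * z = z * A := by
    intro A hA hAs
    have hperp : ∀ w ∈ Kᗮ, A w ∈ Kᗮ := by
      intro w hw
      rw [Submodule.mem_orthogonal]
      intro u hu
      have h1 : ⟪(star A) u, w⟫_ℂ = ⟪u, A w⟫_ℂ := by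
        rw [ContinuousLinearMap.star_eq_adjoint]
        exact ContinuousLinearMap.adjoint_inner_left A w u
      rw [← h1]
      exact (Submodule.mem_orthogonal K w).mp hw _ (hAs u hu)
    ext v
    show A (z v) = z (A v)
    have hAv : A v = A (z v) + A (v - z v) := by rw [← map_add, add_sub_cancel]
    have hsub : v - z v ∈ Kᗮ := Submodule.sub_starProjection_mem_orthogonal (K := K) v
    rw [hAv, map_add, z1 _ (hA _ (hzmem v)), z3 _ (hperp _ hsub), add_zero]
  have hQ'inv : ∀ t ∈ Set.centralizer (Q : Set (H →L[ℂ] H)), ∀ k ∈ K, t k ∈ K := by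
    intro t ht
    refine invK t ?_
    rintro v ⟨a, ha, η, rfl⟩
    have hcomm : (a * e) * t = t * (a * e) := ht _ (mul_mem ha he)
    have h2 : t ((a * e) η) = (a * e) (t η) := by
      have := congrArg (fun f : H →L[ℂ] H => f η) hcomm.symm
      simpa using this
    rw [h2]
    exact hSK _ ⟨a, ha, t η, rfl⟩
  have hQ'star : ∀ t ∈ Set.centralizer (Q : Set (H →L[ℂ] H)),
      star t ∈ Set.centralizer (Q : Set (H →L[ℂ] H)) := by
    intro t ht b hb
    have h1 : (star b) * t = t * (star b) := ht _ (star_mem hb)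
    calc b * star t = star (t * star b) := by rw [star_mul, star_star]
      _ = star (star b * t) := by rw [← h1]
      _ = star t * b := by rw [star_mul, star_star]
  have hzQ' : ∀ t ∈ Set.centralizer (Q : Set (H →L[ℂ] H)), t * z = z * t :=
    fun t ht => commz t (hQ'inv t ht) (hQ'inv _ (hQ'star t ht))
  have hzQmem : z ∈ (Q : Set (H →L[ℂ] H)) := by
    rw [← Q.centralizer_centralizer]
    exact Set.mem_centralizer_iff.mpr hzQ'
  have hzQcomm : ∀ y ∈ Q, z * y = y * z := by
    intro y hy
    have h1 : ∀ k ∈ K, y k ∈ K := by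
      refine invK y ?_
      rintro v ⟨a, ha, η, rfl⟩
      refine hSK _ ⟨y * a, mul_mem hy ha, η, ?_⟩
      show y ((a * e) η) = ((y * a) * e) η
      rw [mul_assoc]
      rfl
    have h2 : ∀ k ∈ K, (star y) k ∈ K := by
      refine invK (star y) ?_
      rintro v ⟨a, ha, η, rfl⟩
      refine hSK _ ⟨star y * a, mul_mem (star_mem hy) ha, η, ?_⟩
      show (star y) ((a * e) η) = ((star y * a) * e) η
      rw [mul_assoc]
      rfl
    exact (commz y h1 h2).symm
  have hzne : z ≠ 0 := by
    intro h0
    apply hene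
    ext η
    have hmem : e η ∈ K := hSK _ ⟨1, one_mem Q, η, by simp⟩
    have h := z1 _ hmem
    rw [h0] at h
    simpa using h.symm
  have hxz : ∀ x ∈ (P : Set (H →L[ℂ] H)), x * z ∈ (Q : Set (H →L[ℂ] H)) := by
    intro x hx
    rw [← Q.centralizer_centralizer]
    refine Set.mem_centralizer_iff.mpr ?_
    intro t ht
    have hclaim : ∀ k ∈ K, t (x k) = x (t k) := by
      have hle : K ≤ LinearMap.ker ((t * x - x * t : H →L[ℂ] H) : H →ₗ[ℂ] H) := by
        rw [hKdef]
        apply Submodule.topologicalClosure_minimal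
        · rw [Submodule.span_le]
          rintro v ⟨a, ha, η, rfl⟩
          have hxa : x * a ∈ (P : Set (H →L[ℂ] H)) := mul_mem hx (hPQ ha)
          have hmem : (x * a) * e ∈ {w | ∃ x ∈ P, w = x * e} := ⟨x * a, hxa, rfl⟩
          rw [hPe] at hmem
          obtain ⟨y, hy, hye⟩ := hmem
          have hx1 : ∀ ξ : H, x ((a * e) ξ) = (y * e) ξ := by
            intro ξ
            have hq : x * (a * e) = y * e := by rw [← mul_assoc, ← hye]
            have := congrArg (fun f : H →L[ℂ] H => f ξ) hq
            simpa using this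
          have hte : (a * e) * t = t * (a * e) := ht _ (mul_mem ha he)
          have htye : (y * e) * t = t * (y * e) := ht _ (mul_mem hy he)
          have e1 : t ((a * e) η) = (a * e) (t η) := by
            have := congrArg (fun f : H →L[ℂ] H => f η) hte.symm
            simpa using this
          have e2 : t ((y * e) η) = (y * e) (t η) := by
            have := congrArg (fun f : H →L[ℂ] H => f η) htye.symm
            simpa using this
          rw [SetLike.mem_coe, LinearMap.mem_ker]
          show t (x ((a * e) η)) - x (t ((a * e) η)) = 0
          rw [hx1 η, e1, hx1 (t η), e2, sub_self]
        · exact ContinuousLinearMap.isClosed_ker _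
      intro k hk
      have h := hle hk
      rw [LinearMap.mem_ker] at h
      have h2 : t (x k) - x (t k) = 0 := h
      exact sub_eq_zero.mp h2
    ext v
    show t ((x * z) v) = (x * z) (t v)
    have hzt : t (z v) = z (t v) := by
      have := congrArg (fun f : H →L[ℂ] H => f v) (hzQ' t ht)
      simpa using this
    show t (x (z v)) = x (z (t v))
    rw [← hzt]
    exact hclaim _ (hzmem v)
  refine ⟨z, ⟨hzQmem, zid, zsa⟩, hzQcomm, hzne, ?_⟩
  ext w
  constructor
  · rintro ⟨x, hx, rfl⟩
    refine ⟨x * z, hxz x hx, ?_⟩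
    rw [mul_assoc, zid.eq]
  · rintro ⟨y, hy, rfl⟩
    exact ⟨y, hPQ hy, rfl⟩

/-- if `Pe = Qe` for some nonzero projection `e ∈ Q` then `Pz = Qz` for some
nonzero central projection `z` of `Q`; consequently `P ⊇ Q` is entirely non-trivial iff
`Pe ≠ Qe` for every nonzero projection `e ∈ Q`. -/
theorem stmt1 (P Q : VonNeumannAlgebra H) (E : (H →L[ℂ] H) → (H →L[ℂ] H))
    (hE : IsCondExp (P : Set (H →L[ℂ] H)) (Q : Set (H →L[ℂ] H)) E) :
    (∀ e : H →L[ℂ] H, IsProjectionIn (Q : Set (H →L[ℂ] H)) e → e ≠ 0 →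
      {w | ∃ x ∈ P, w = x * e} = {w | ∃ y ∈ Q, w = y * e} →
      ∃ z : H →L[ℂ] H, IsProjectionIn (Q : Set (H →L[ℂ] H)) z ∧
        (∀ y ∈ Q, z * y = y * z) ∧ z ≠ 0 ∧
        {w | ∃ x ∈ P, w = x * z} = {w | ∃ y ∈ Q, w = y * z}) ∧
    (EntirelyNonTrivialCentral (P : Set (H →L[ℂ] H)) (Q : Set (H →L[ℂ] H)) ↔
      ∀ e : H →L[ℂ] H, IsProjectionIn (Q : Set (H →L[ℂ] H)) e → e ≠ 0 →
        {w | ∃ x ∈ P, w = x * e} ≠ {w | ∃ y ∈ Q, w = y * e}) := by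
  have main : ∀ e : H →L[ℂ] H, IsProjectionIn (Q : Set (H →L[ℂ] H)) e → e ≠ 0 →
      {w | ∃ x ∈ P, w = x * e} = {w | ∃ y ∈ Q, w = y * e} →
      ∃ z : H →L[ℂ] H, IsProjectionIn (Q : Set (H →L[ℂ] H)) z ∧
        (∀ y ∈ Q, z * y = y * z) ∧ z ≠ 0 ∧
        {w | ∃ x ∈ P, w = x * z} = {w | ∃ y ∈ Q, w = y * z} :=
    fun e he hene hPe => key_lemma P Q hE.1 e he.1 hene hPe
  refine ⟨main, ?_, ?_⟩
  · intro hENT e he hene hPe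
    obtain ⟨z, hz1, hz2, hz3, hz4⟩ := main e he hene hPe
    exact hENT z hz1 hz2 hz3 hz4
  · intro h z hz1 _ hz3
    exact h z hz1 hz3
end

section
/- Let P ⊇ Q be an entirely non-trivial inclusion of von Neumann algebras with faithful normal conditional expectation E_Q : P → Q, and let f ∈ Q be a projection with central support c_f^Q = 1 in Q. Then the inclusion fPf ⊇ fQf is again entirely non-trivial. -/
open scoped ComplexOrder
open ContinuousLinearMap

variable {H : Type*} [NormedAddCommGroup H] [InnerProductSpace ℂ H] [CompleteSpace H]

/-- Entire non-triviality in the equivalent form: `Pe ≠ Qe` for every nonzero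
projection `e ∈ Q`. -/
def EntirelyNonTrivial (P Q : Set (H →L[ℂ] H)) : Prop :=
  ∀ e : H →L[ℂ] H, IsProjectionIn Q e → e ≠ 0 →
    {w | ∃ x ∈ P, w = x * e} ≠ {w | ∃ y ∈ Q, w = y * e}

/-- The corner (reduced) algebra `fSf`. -/
def cornerSet (f : H →L[ℂ] H) (S : Set (H →L[ℂ] H)) : Set (H →L[ℂ] H) :=
  {w | ∃ x ∈ S, w = f * x * f}

lemma proj_comm_aux (K : Submodule ℂ H) [CompleteSpace K] (T : H →L[ℂ] H)
    (hT : ∀ v ∈ K, T v ∈ K) (hT' : ∀ v ∈ K, (star T) v ∈ K) :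
    (K.subtypeL ∘L Submodule.orthogonalProjectionOnto K) * T = T * (K.subtypeL ∘L Submodule.orthogonalProjectionOnto K) := by
  set z := K.subtypeL ∘L Submodule.orthogonalProjectionOnto K with hz
  have hzmem : ∀ h : H, z h ∈ K := fun h => SetLike.coe_mem _
  have hzid : ∀ v ∈ K, z v = v := fun v hv => Submodule.starProjection_eq_self_iff.2 hv
  have hzperp : ∀ v ∈ Kᗮ, z v = 0 := by
    intro v hv
    have : Submodule.orthogonalProjectionOnto K v = 0 :=
      Submodule.orthogonalProjectionOnto_apply_of_mem_orthogonal hv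
    simp [hz, this]
  ext h
  have hdec : T h = T (z h + (h - z h)) := by congr 1; abel
  have hperp : h - z h ∈ Kᗮ := Submodule.sub_starProjection_mem_orthogonal h
  have hTperp : T (h - z h) ∈ Kᗮ := by
    rw [Submodule.mem_orthogonal]
    intro u hu
    have h1 : inner ℂ ((ContinuousLinearMap.adjoint T) u) (h - z h) = (inner ℂ u (T (h - z h)) : ℂ) :=
      ContinuousLinearMap.adjoint_inner_left T (h - z h) u
    rw [← h1]
    have h2 : (ContinuousLinearMap.adjoint T) u ∈ K := by
      rw [← ContinuousLinearMap.star_eq_adjoint]; exact hT' u hu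
    exact (Submodule.mem_orthogonal K _).1 hperp _ h2
  calc (z * T) h = z (T (z h) + T (h - z h)) := by rw [ContinuousLinearMap.mul_apply, ← map_add, ← hdec]
    _ = z (T (z h)) + z (T (h - z h)) := map_add _ _ _
    _ = T (z h) + 0 := by rw [hzid _ (hT _ (hzmem h)), hzperp _ hTperp]
    _ = (T * z) h := by rw [add_zero, ContinuousLinearMap.mul_apply]

/-- if `P ⊇ Q` is entirely non-trivial and `f ∈ Q` is a projection with
central support `1` in `Q`, then `fPf ⊇ fQf` is entirely non-trivial. -/
theorem stmt2 (P Q : VonNeumannAlgebra H) (E : (H →L[ℂ] H) → (H →L[ℂ] H))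
    (hE : IsCondExp (P : Set (H →L[ℂ] H)) (Q : Set (H →L[ℂ] H)) E)
    (hENT : EntirelyNonTrivial (P : Set (H →L[ℂ] H)) (Q : Set (H →L[ℂ] H)))
    (f : H →L[ℂ] H) (hf : IsProjectionIn (Q : Set (H →L[ℂ] H)) f)
    (hcf : ∀ z : H →L[ℂ] H, IsProjectionIn (Q : Set (H →L[ℂ] H)) z →
      (∀ y ∈ Q, z * y = y * z) → f * z = f → z = 1) :
    EntirelyNonTrivial (cornerSet f (P : Set (H →L[ℂ] H)))
      (cornerSet f (Q : Set (H →L[ℂ] H))) := by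
  obtain ⟨hQP, hEQ, hEid, hEadd, hEsmul, hEstar, hEpos, hEbimod, hEfaith⟩ := hE
  obtain ⟨hfQ, hfidem, hfsa⟩ := hf
  intro e he hne hsets
  obtain ⟨⟨y₀, hy₀Q, hey⟩, heidem, hesa⟩ := he
  have heQ : e ∈ (Q : Set (H →L[ℂ] H)) := by
    rw [hey]; exact mul_mem (mul_mem hfQ hy₀Q) hfQ
  have hfe : f * e = e := by
    rw [hey, ← mul_assoc, ← mul_assoc, hfidem]
  have hElm : ∀ q ∈ (Q : Set (H →L[ℂ] H)), ∀ p : H →L[ℂ] H, E (q * p) = q * E p := by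
    intro q hq p
    have h1 : (1 : H →L[ℂ] H) ∈ (Q : Set (H →L[ℂ] H)) := one_mem Q
    have := hEbimod q hq p 1 h1
    simpa using this
  -- entire non-triviality of P ⊇ Q at e
  have hne' := hENT e ⟨heQ, heidem, hesa⟩ hne
  have hsub : {w | ∃ y ∈ (Q : Set (H →L[ℂ] H)), w = y * e} ⊆
      {w | ∃ x ∈ (P : Set (H →L[ℂ] H)), w = x * e} := by
    rintro w ⟨y, hy, hw⟩; exact ⟨y, hQP hy, hw⟩
  have hnsub : ¬ ({w | ∃ x ∈ (P : Set (H →L[ℂ] H)), w = x * e} ⊆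
      {w | ∃ y ∈ (Q : Set (H →L[ℂ] H)), w = y * e}) := fun hss =>
    hne' (Set.Subset.antisymm hss hsub)
  obtain ⟨w, hwP, hwnQ⟩ := Set.not_subset.1 hnsub
  obtain ⟨x, hxP, rfl⟩ := hwP
  have hkey : (x - E x) * e ≠ 0 := by
    intro h0
    exact hwnQ ⟨E x, hEQ x hxP, by rw [sub_mul, sub_eq_zero] at h0; exact h0⟩
  -- from the assumed corner equality: f * (p - E p) * e = 0 for all p ∈ P
  have h3 : ∀ p ∈ (P : Set (H →L[ℂ] H)), f * (p - E p) * e = 0 := by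
    intro p hp
    have hmem : f * p * f * e ∈ {w | ∃ a ∈ cornerSet f (P : Set (H →L[ℂ] H)), w = a * e} :=
      ⟨f * p * f, ⟨p, hp, rfl⟩, rfl⟩
    rw [hsets] at hmem
    obtain ⟨b, ⟨q, hq, rfl⟩, hweq⟩ := hmem
    have l1 : f * p * f * e = f * p * e := by rw [mul_assoc (f * p) f e, hfe]
    have r1 : f * q * f * e = f * q * e := by rw [mul_assoc (f * q) f e, hfe]
    have heq : f * p * e = f * q * e := by rw [← l1, ← r1, hweq]
    have hqmem : f * q * e ∈ (Q : Set (H →L[ℂ] H)) := mul_mem (mul_mem hfQ hq) heQ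
    have hEeq : f * E p * e = f * p * e := by
      calc f * E p * e = E (f * p * e) := (hEbimod f hfQ p e heQ).symm
        _ = E (f * q * e) := by rw [heq]
        _ = f * q * e := hEid _ hqmem
        _ = f * p * e := heq.symm
    rw [mul_sub, sub_mul, hEeq, sub_self]
  -- the subspace generated by Q' Q (p - E p) e H
  set G : Set H := {v | ∃ a ∈ Set.centralizer (Q : Set (H →L[ℂ] H)),
    ∃ q ∈ (Q : Set (H →L[ℂ] H)), ∃ p ∈ (P : Set (H →L[ℂ] H)), ∃ h : H,
      v = a (q ((p - E p) (e h)))} with hG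
  set K : Submodule ℂ H := (Submodule.span ℂ G).topologicalClosure with hK
  haveI : CompleteSpace K := (Submodule.isClosed_topologicalClosure _).completeSpace_coe
  set z : H →L[ℂ] H := K.subtypeL ∘L Submodule.orthogonalProjectionOnto K with hzdef
  have hGK : G ⊆ (K : Set H) := fun v hv =>
    Submodule.le_topologicalClosure _ (Submodule.subset_span hv)
  have hinvQ : ∀ T ∈ (Q : Set (H →L[ℂ] H)), ∀ v ∈ K, T v ∈ K := by
    intro T hT
    have hclosed : IsClosed ((Submodule.comap (T : H →ₗ[ℂ] H) K : Submodule ℂ H) : Set H) :=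
      (Submodule.isClosed_topologicalClosure _).preimage T.continuous
    have hle : Submodule.span ℂ G ≤ Submodule.comap (T : H →ₗ[ℂ] H) K := by
      rw [Submodule.span_le]
      rintro v ⟨a, ha, q, hq, p, hp, h, rfl⟩
      have hcomm : T * a = a * T := ha T hT
      have hval : T (a (q ((p - E p) (e h)))) = a ((T * q) ((p - E p) (e h))) := by
        calc T (a (q ((p - E p) (e h)))) = (T * a) (q ((p - E p) (e h))) := rfl
          _ = (a * T) (q ((p - E p) (e h))) := by rw [hcomm]
          _ = a ((T * q) ((p - E p) (e h))) := rfl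
      simp only [SetLike.mem_coe, Submodule.mem_comap, ContinuousLinearMap.coe_coe]
      rw [hval]
      exact hGK ⟨a, ha, T * q, mul_mem hT hq, p, hp, h, rfl⟩
    exact fun v hv => (Submodule.topologicalClosure_minimal _ hle hclosed) hv
  have hinvC : ∀ T ∈ Set.centralizer (Q : Set (H →L[ℂ] H)), ∀ v ∈ K, T v ∈ K := by
    intro T hT
    have hclosed : IsClosed ((Submodule.comap (T : H →ₗ[ℂ] H) K : Submodule ℂ H) : Set H) :=
      (Submodule.isClosed_topologicalClosure _).preimage T.continuous
    have hle : Submodule.span ℂ G ≤ Submodule.comap (T : H →ₗ[ℂ] H) K := by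
      rw [Submodule.span_le]
      rintro v ⟨a, ha, q, hq, p, hp, h, rfl⟩
      have hval : T (a (q ((p - E p) (e h)))) = (T * a) (q ((p - E p) (e h))) := rfl
      simp only [SetLike.mem_coe, Submodule.mem_comap, ContinuousLinearMap.coe_coe]
      rw [hval]
      exact hGK ⟨T * a, Set.mul_mem_centralizer hT ha, q, hq, p, hp, h, rfl⟩
    exact fun v hv => (Submodule.topologicalClosure_minimal _ hle hclosed) hv
  have hstarC : ∀ T ∈ Set.centralizer (Q : Set (H →L[ℂ] H)),
      star T ∈ Set.centralizer (Q : Set (H →L[ℂ] H)) := by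
    intro T hT
    rw [Set.mem_centralizer_iff]
    intro q hq
    have h1 : star q * T = T * star q := hT (star q) (star_mem hq)
    have h2 := congrArg star h1
    rw [star_mul, star_mul, star_star] at h2
    exact h2.symm
  -- f kills K
  have hfK : ∀ v ∈ K, f v = 0 := by
    have hclosed : IsClosed ((LinearMap.ker (f : H →ₗ[ℂ] H) : Submodule ℂ H) : Set H) :=
      isClosed_ker f
    have hle : Submodule.span ℂ G ≤ LinearMap.ker (f : H →ₗ[ℂ] H) := by
      rw [Submodule.span_le]
      rintro v ⟨a, ha, q, hq, p, hp, h, rfl⟩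
      have hfa : f * a = a * f := ha f hfQ
      have hzero : f * (q * (p - E p)) * e = 0 := by
        have hqp : q * p ∈ (P : Set (H →L[ℂ] H)) := mul_mem (hQP hq) hp
        have hq2 : q * (p - E p) = q * p - E (q * p) := by rw [mul_sub, hElm q hq p]
        rw [hq2]
        exact h3 (q * p) hqp
      have hval : f (a (q ((p - E p) (e h)))) = a ((f * (q * (p - E p)) * e) h) := by
        calc f (a (q ((p - E p) (e h)))) = (f * a) (q ((p - E p) (e h))) := rfl
          _ = (a * f) (q ((p - E p) (e h))) := by rw [hfa]
          _ = a ((f * (q * (p - E p)) * e) h) := rfl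
      have : f (a (q ((p - E p) (e h)))) = 0 := by
        rw [hval, hzero]; simp
      simpa only [SetLike.mem_coe, LinearMap.mem_ker, ContinuousLinearMap.coe_coe] using this
    intro v hv
    have := (Submodule.topologicalClosure_minimal _ hle hclosed) hv
    simpa only [LinearMap.mem_ker, ContinuousLinearMap.coe_coe] using this
  have hfz : f * z = 0 := by
    ext h
    have hm : z h ∈ K := SetLike.coe_mem _
    simp only [mul_apply, zero_apply]
    exact hfK _ hm
  -- z is a projection commuting with Q, belonging to Q
  have hzsa : IsSelfAdjoint z := isSelfAdjoint_starProjection K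
  have hzidem : IsIdempotentElem z := by
    show z * z = z
    ext h
    have hm : z h ∈ K := SetLike.coe_mem _
    show (↑(Submodule.orthogonalProjectionOnto K (z h)) : H) = z h
    exact Submodule.starProjection_eq_self_iff.2 hm
  have hzQ' : ∀ T ∈ Set.centralizer (Q : Set (H →L[ℂ] H)), T * z = z * T := fun T hT =>
    (proj_comm_aux K T (hinvC T hT) (hinvC (star T) (hstarC T hT))).symm
  have hzQ : z ∈ (Q : Set (H →L[ℂ] H)) := by
    rw [← Q.centralizer_centralizer]
    exact fun T hT => hzQ' T hT
  have hzcomm : ∀ y ∈ Q, z * y = y * z := fun y hy =>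
    proj_comm_aux K y (hinvQ y hy) (hinvQ (star y) (star_mem hy))
  -- apply the central-support hypothesis to 1 - z
  have h1z : (1 : H →L[ℂ] H) - z = 1 := by
    apply hcf
    · refine ⟨sub_mem (one_mem Q) hzQ, hzidem.one_sub, ?_⟩
      have : star ((1 : H →L[ℂ] H) - z) = 1 - z := by
        rw [star_sub, star_one, hzsa.star_eq]
      exact this
    · intro y hy
      rw [sub_mul, mul_sub, one_mul, mul_one, hzcomm y hy]
    · rw [mul_sub, mul_one, hfz, sub_zero]
  have hz0 : z = 0 := by
    have h' : (1 : H →L[ℂ] H) - (1 - z) = 0 := by rw [h1z, sub_self]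
    calc z = 1 - (1 - z) := by abel
      _ = 0 := h'
  -- contradiction
  apply hkey
  ext h
  have hv : (x - E x) (e h) ∈ K :=
    hGK ⟨1, Set.one_mem_centralizer, 1, one_mem Q, x, hxP, h, by simp⟩
  have hzv : z ((x - E x) (e h)) = (x - E x) (e h) := Submodule.starProjection_eq_self_iff.2 hv
  rw [hz0, ContinuousLinearMap.zero_apply] at hzv
  simp only [mul_apply, ContinuousLinearMap.zero_apply]
  exact hzv.symm
end

section
/- Let (P, F) = (P₁, F₁) ⋆_Q (P₂, F₂) be an amalgamated free product of von Neumann algebras over Q with faithful normal conditional expectations. If f ∈ Q is a projection with central support c_f^Q = 1 in Q, then (fPf, F|_{fPf}) is canonically the amalgamated free product (fP₁f, F₁|_{fP₁f}) ⋆_{fQf} (fP₂f, F₂|_{fP₂f}). -/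
set_option linter.unusedSectionVars false
set_option maxHeartbeats 1000000


open scoped ComplexOrder InnerProductSpace

variable {H : Type*} [NormedAddCommGroup H] [InnerProductSpace ℂ H] [CompleteSpace H]

/-- `(P, F) = (P₁, F₁) ⋆_Q (P₂, F₂)`: an amalgamated free product of von Neumann
algebras over `Q`, phrased for the carriers. `P` is generated by `P₁ ∪ P₂` (any von
Neumann algebra containing `P₁` and `P₂` contains `P`), the faithful normal conditional
expectation `F : P → Q` restricts to `F₁`, `F₂` on `P₁`, `P₂`, and `F` vanishes on
every alternating word in `Ker F₁ ∩ P₁` and `Ker F₂ ∩ P₂`. -/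
def IsAFP (P P₁ P₂ Q : Set (H →L[ℂ] H)) (F F₁ F₂ : (H →L[ℂ] H) → (H →L[ℂ] H)) : Prop :=
  Q ⊆ P₁ ∧ Q ⊆ P₂ ∧ P₁ ⊆ P ∧ P₂ ⊆ P ∧
  (∀ R : VonNeumannAlgebra H, P₁ ⊆ (R : Set (H →L[ℂ] H)) →
    P₂ ⊆ (R : Set (H →L[ℂ] H)) → P ⊆ (R : Set (H →L[ℂ] H))) ∧
  IsCondExp P Q F ∧ IsCondExp P₁ Q F₁ ∧ IsCondExp P₂ Q F₂ ∧
  (∀ x ∈ P₁, F x = F₁ x) ∧ (∀ x ∈ P₂, F x = F₂ x) ∧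
  (∀ (n : ℕ) (x : Fin n → (H →L[ℂ] H)) (ε : Fin n → Bool), n ≠ 0 →
    (∀ i, x i ∈ (if ε i then P₁ else P₂) ∧ F (x i) = 0) →
    (∀ (i : ℕ) (h : i + 1 < n), ε ⟨i, Nat.lt_of_succ_lt h⟩ ≠ ε ⟨i + 1, h⟩) →
    F (List.ofFn x).prod = 0)

section helpers
variable {E : Type*} [NormedAddCommGroup E] [InnerProductSpace ℂ E] [CompleteSpace E]

lemma proj_comm (K : Submodule ℂ E) [K.HasOrthogonalProjection] (g g' : E →L[ℂ] E)
    (hadj : ∀ u w, ⟪g u, w⟫_ℂ = ⟪u, g' w⟫_ℂ)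
    (hg : ∀ u ∈ K, g u ∈ K) (hg' : ∀ u ∈ K, g' u ∈ K) (v : E) :
    (Submodule.orthogonalProjection K (g v) : E) = g (Submodule.orthogonalProjection K v) := by
  apply Submodule.eq_starProjection_of_mem_of_inner_eq_zero
  · exact hg _ (Submodule.orthogonalProjection K v).2
  · intro w hw
    have h : g v - g (Submodule.orthogonalProjection K v) = g (v - Submodule.orthogonalProjection K v) := by
      rw [map_sub]
    rw [h, hadj, inner_eq_zero_symm]
    exact (Submodule.sub_starProjection_mem_orthogonal (K := K) v) _ (hg' w hw)

lemma clm_closure_invariant (K : Submodule ℂ E) (g : E →L[ℂ] E)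
    (h : ∀ u ∈ K, g u ∈ K.topologicalClosure) :
    ∀ u ∈ K.topologicalClosure, g u ∈ K.topologicalClosure := by
  intro u hu
  have h1 : K ≤ (K.topologicalClosure).comap (g : E →ₗ[ℂ] E) := fun w hw => h w hw
  have hcl : IsClosed ((K.topologicalClosure).comap (g : E →ₗ[ℂ] E) : Set E) := by
    have he : ((K.topologicalClosure).comap (g : E →ₗ[ℂ] E) : Set E) = g ⁻¹' (K.topologicalClosure : Set E) := rfl
    rw [he]
    exact (K.isClosed_topologicalClosure).preimage g.continuous
  exact K.topologicalClosure_minimal h1 hcl hu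

lemma span_closure_invariant (s : Set E) (g : E →L[ℂ] E)
    (h : ∀ w ∈ s, g w ∈ Submodule.span ℂ s) :
    ∀ u ∈ (Submodule.span ℂ s).topologicalClosure,
      g u ∈ (Submodule.span ℂ s).topologicalClosure := by
  apply clm_closure_invariant
  intro u hu
  have hsub : s ⊆ ((Submodule.span ℂ s).comap (g : E →ₗ[ℂ] E) : Set E) := fun w hw => h w hw
  exact Submodule.le_topologicalClosure _ (Submodule.span_le.mpr hsub hu)

lemma mem_closure_iff_approx (K : Submodule ℂ E) (u : E) (hu : u ∈ K.topologicalClosure) :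
    ∀ ε > (0:ℝ), ∃ w ∈ K, ‖u - w‖ < ε := by
  intro ε hε
  have : u ∈ closure (K : Set E) := by rwa [← Submodule.topologicalClosure_coe]
  rcases Metric.mem_closure_iff.1 this ε hε with ⟨w, hw, hd⟩
  exact ⟨w, hw, by rwa [dist_eq_norm] at hd⟩

lemma norm_eq_zero_of_forall_le {D : E} {C : ℝ} (hC : 0 ≤ C)
    (h : ∀ ε > (0:ℝ), ‖D‖ ≤ C * ε) : D = 0 := by
  by_contra hne
  have hD : 0 < ‖D‖ := norm_pos_iff.2 hne
  have h1 := h (‖D‖ / (C + 1)) (by positivity)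
  have h2 : C * (‖D‖ / (C + 1)) < ‖D‖ := by
    rw [mul_div_assoc', div_lt_iff₀ (by linarith : (0:ℝ) < C + 1)]
    nlinarith
  linarith

end helpers

/-- If `f ∈ Q` is a projection with central support 1 in `Q`, then `span Q f H` is
dense in `H`: anything orthogonal to all `q f ζ` is zero. -/
lemma dense_Qf (Q : VonNeumannAlgebra H) (f : H →L[ℂ] H)
    (hfQ : f ∈ Q) (hidem : f * f = f) (hsa : star f = f)
    (hcf : ∀ z : H →L[ℂ] H, IsProjectionIn (Q : Set (H →L[ℂ] H)) z →
      (∀ y ∈ Q, z * y = y * z) → f * z = f → z = 1) :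
    ∀ w : H, (∀ q ∈ Q, ∀ ζ : H, ⟪q (f ζ), w⟫_ℂ = 0) → w = 0 := by
  classical
  set Kgen : Set H := {w | ∃ q ∈ Q, ∃ ζ : H, w = q (f ζ)} with hKgen
  set K : Submodule ℂ H := (Submodule.span ℂ Kgen).topologicalClosure with hK
  haveI : CompleteSpace K := (Submodule.isClosed_topologicalClosure _).completeSpace_coe
  set z : H →L[ℂ] H := K.subtypeL ∘L Submodule.orthogonalProjection K with hz
  have hz_apply : ∀ v : H, z v = ↑(Submodule.orthogonalProjection K v) := fun v => rfl
  have hz_memK : ∀ v : H, z v ∈ K := fun v => (Submodule.orthogonalProjection K v).2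
  have hz_fix : ∀ v ∈ K, z v = v := by
    intro v hv
    rw [hz_apply]
    exact Submodule.starProjection_eq_self_iff.2 hv
  -- key commutation principle
  have key : ∀ m : H →L[ℂ] H, (∀ w ∈ Kgen, m w ∈ Submodule.span ℂ Kgen) →
      (∀ w ∈ Kgen, (star m) w ∈ Submodule.span ℂ Kgen) → m * z = z * m := by
    intro m h1 h2
    ext v
    have hadj : ∀ u w : H, ⟪m u, w⟫_ℂ = ⟪u, (star m) w⟫_ℂ := by
      intro u w
      rw [ContinuousLinearMap.star_eq_adjoint]
      exact (ContinuousLinearMap.adjoint_inner_right m u w).symm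
    have hp := proj_comm K m (star m) hadj
      (span_closure_invariant Kgen m h1) (span_closure_invariant Kgen (star m) h2) v
    simp only [ContinuousLinearMap.mul_apply, hz_apply]
    rw [← hp]
  -- membership of generators
  have hgen : ∀ q ∈ Q, ∀ ζ : H, q (f ζ) ∈ Kgen := fun q hq ζ => ⟨q, hq, ζ, rfl⟩
  -- z is a projection in Q commuting with Q
  have hzQ : z ∈ (Q : Set (H →L[ℂ] H)) := by
    rw [← Q.centralizer_centralizer]
    intro m hm
    refine key m ?_ ?_
    · rintro w ⟨q, hq, ζ, rfl⟩
      apply Submodule.subset_span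
      have : m (q (f ζ)) = q (f (m ζ)) := by
        have h1 : m * (q * f) = (q * f) * m := (hm _ (mul_mem hq hfQ)).symm
        calc m (q (f ζ)) = (m * (q * f)) ζ := rfl
          _ = ((q * f) * m) ζ := by rw [h1]
          _ = q (f (m ζ)) := rfl
      rw [this]
      exact hgen q hq (m ζ)
    · rintro w ⟨q, hq, ζ, rfl⟩
      apply Submodule.subset_span
      have hsm : star m ∈ Set.centralizer (Q : Set (H →L[ℂ] H)) :=
        Set.star_mem_centralizer' (fun a ha => star_mem ha) hm
      have : (star m) (q (f ζ)) = q (f ((star m) ζ)) := by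
        have h1 : (star m) * (q * f) = (q * f) * (star m) := (hsm _ (mul_mem hq hfQ)).symm
        calc (star m) (q (f ζ)) = ((star m) * (q * f)) ζ := rfl
          _ = ((q * f) * (star m)) ζ := by rw [h1]
          _ = q (f ((star m) ζ)) := rfl
      rw [this]
      exact hgen q hq ((star m) ζ)
  have hzcomm : ∀ y ∈ Q, z * y = y * z := by
    intro y hy
    refine (key y ?_ ?_).symm
    · rintro w ⟨q, hq, ζ, rfl⟩
      apply Submodule.subset_span
      exact ⟨y * q, mul_mem hy hq, ζ, rfl⟩
    · rintro w ⟨q, hq, ζ, rfl⟩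
      apply Submodule.subset_span
      exact ⟨(star y) * q, mul_mem (star_mem hy) hq, ζ, rfl⟩
  have hzidem : IsIdempotentElem z := by
    refine ContinuousLinearMap.ext fun v => ?_
    show z (z v) = z v
    exact hz_fix _ (hz_memK v)
  have hzsa : IsSelfAdjoint z := isSelfAdjoint_starProjection K
  have hzf : z * f = f := by
    refine ContinuousLinearMap.ext fun ξ => ?_
    show z (f ξ) = f ξ
    refine hz_fix _ (Submodule.le_topologicalClosure _ (Submodule.subset_span ?_))
    exact ⟨1, one_mem Q, ξ, by simp⟩
  have hfz : f * z = f := by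
    have : star (z * f) = star f := by rw [hzf]
    rwa [star_mul, hzsa.star_eq, hsa] at this
  have hz1 : z = 1 := hcf z ⟨hzQ, hzidem, hzsa⟩ hzcomm hfz
  -- conclude density
  intro w hw
  have hwK : w ∈ K := by
    have : z w = w := by rw [hz1]; rfl
    rw [← this]; exact hz_memK w
  have hle : K ≤ (ℂ ∙ w)ᗮ := by
    apply Submodule.topologicalClosure_minimal
    · apply Submodule.span_le.mpr
      rintro u ⟨q, hq, ζ, rfl⟩
      exact Submodule.mem_orthogonal_singleton_iff_inner_left.2 (hw q hq ζ)
    · exact Submodule.isClosed_orthogonal _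
  have : ⟪w, w⟫_ℂ = 0 := Submodule.mem_orthogonal_singleton_iff_inner_left.1 (hle hwK)
  exact inner_self_eq_zero.1 this

noncomputable def diagOp (g : H →L[ℂ] H) : WithLp 2 (H × H) →L[ℂ] WithLp 2 (H × H) :=
  ((WithLp.prodContinuousLinearEquiv 2 ℂ H H).symm.toContinuousLinearMap).comp
    ((g.prodMap g).comp (WithLp.prodContinuousLinearEquiv 2 ℂ H H).toContinuousLinearMap)

lemma diagOp_fst (g : H →L[ℂ] H) (u : WithLp 2 (H × H)) : (diagOp g u).fst = g u.fst := rfl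
lemma diagOp_snd (g : H →L[ℂ] H) (u : WithLp 2 (H × H)) : (diagOp g u).snd = g u.snd := rfl

lemma h2ext {u v : WithLp 2 (H × H)} (h1 : u.fst = v.fst) (h2 : u.snd = v.snd) : u = v :=
  WithLp.ofLp_injective 2 (Prod.ext h1 h2)

lemma h2_add_fst (u v : WithLp 2 (H × H)) : (u + v).fst = u.fst + v.fst := rfl
lemma h2_sub_fst (u v : WithLp 2 (H × H)) : (u - v).fst = u.fst - v.fst := rfl
lemma h2_sub_snd (u v : WithLp 2 (H × H)) : (u - v).snd = u.snd - v.snd := rfl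

lemma diagOp_mul (g h : H →L[ℂ] H) (u : WithLp 2 (H × H)) :
    diagOp g (diagOp h u) = diagOp (g * h) u := rfl

lemma diagOp_inner (g : H →L[ℂ] H) (u w : WithLp 2 (H × H)) :
    ⟪diagOp g u, w⟫_ℂ = ⟪u, diagOp (star g) w⟫_ℂ := by
  rw [WithLp.prod_inner_apply, WithLp.prod_inner_apply]
  change ⟪g u.fst, w.fst⟫_ℂ + ⟪g u.snd, w.snd⟫_ℂ
    = ⟪u.fst, (star g) w.fst⟫_ℂ + ⟪u.snd, (star g) w.snd⟫_ℂ
  rw [ContinuousLinearMap.star_eq_adjoint,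
    ContinuousLinearMap.adjoint_inner_right, ContinuousLinearMap.adjoint_inner_right]

lemma h2_norm_fst (u : WithLp 2 (H × H)) : ‖u.fst‖ ≤ ‖u‖ := by
  have h := WithLp.prod_norm_sq_eq_of_L2 u
  nlinarith [norm_nonneg u, norm_nonneg u.fst, norm_nonneg u.snd, sq_nonneg ‖u.snd‖]

lemma h2_norm_snd (u : WithLp 2 (H × H)) : ‖u.snd‖ ≤ ‖u‖ := by
  have h := WithLp.prod_norm_sq_eq_of_L2 u
  nlinarith [norm_nonneg u, norm_nonneg u.fst, norm_nonneg u.snd, sq_nonneg ‖u.fst‖]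

/-- Lemma M: approximate identity from the ideal `Q f Q` on two given vectors. -/
lemma approx_QfQ (Q : VonNeumannAlgebra H) (f : H →L[ℂ] H)
    (hfQ : f ∈ Q) (hsa : star f = f)
    (hdense : ∀ w : H, (∀ q ∈ Q, ∀ ζ : H, ⟪q (f ζ), w⟫_ℂ = 0) → w = 0)
    (u₁ u₂ : H) (ε : ℝ) (hε : 0 < ε) :
    ∃ w ∈ Submodule.span ℂ {g : H →L[ℂ] H | ∃ c ∈ Q, ∃ d ∈ Q, g = c * f * d},
      ‖w u₁ - u₁‖ < ε ∧ ‖w u₂ - u₂‖ < ε := by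
  classical
  set u : WithLp 2 (H × H) := (WithLp.equiv 2 (H × H)).symm (u₁, u₂) with hu_def
  have hufst : u.fst = u₁ := rfl
  have husnd : u.snd = u₂ := rfl
  set Sp : Set (WithLp 2 (H × H)) :=
    {v | ∃ c ∈ Q, ∃ d ∈ Q, v = diagOp (c * f * d) u} with hSp
  set E2 : Submodule ℂ (WithLp 2 (H × H)) := (Submodule.span ℂ Sp).topologicalClosure with hE2
  haveI : CompleteSpace E2 := (Submodule.isClosed_topologicalClosure _).completeSpace_coe
  -- invariance of E2 under diagOp m for suitable m
  have hinv : ∀ m : H →L[ℂ] H,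
      (∀ c ∈ Q, ∀ d ∈ Q, ∃ c' ∈ Q, ∃ d' ∈ Q, m * (c * f * d) = c' * f * d') →
      ∀ v ∈ E2, diagOp m v ∈ E2 := by
    intro m hm
    apply span_closure_invariant
    rintro v ⟨c, hc, d, hd, rfl⟩
    rcases hm c hc d hd with ⟨c', hc', d', hd', heq⟩
    apply Submodule.subset_span
    rw [diagOp_mul, heq]
    exact ⟨c', hc', d', hd', rfl⟩
  have hpatL : ∀ q ∈ Q, ∀ c ∈ Q, ∀ d ∈ Q,
      ∃ c' ∈ Q, ∃ d' ∈ Q, (f * q) * (c * f * d) = c' * f * d' := by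
    intro q hq c hc d hd
    exact ⟨f * q * c, mul_mem (mul_mem hfQ hq) hc, d, hd, by simp only [mul_assoc]⟩
  set pu := Submodule.orthogonalProjection E2 u with hpu
  set u' : WithLp 2 (H × H) := u - ↑pu with hu'
  have hu'perp : ∀ e ∈ E2, ⟪e, u'⟫_ℂ = 0 :=
    fun e he => (Submodule.sub_starProjection_mem_orthogonal (K := E2) u) e he
  -- key claim
  have hkey : ∀ q ∈ Q, (f * q) u'.fst = 0 ∧ (f * q) u'.snd = 0 := by
    intro q hq
    have hmem : diagOp (f * q) u' ∈ E2 := by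
      have h1 : diagOp (f * q) u ∈ E2 := by
        apply Submodule.le_topologicalClosure
        apply Submodule.subset_span
        exact ⟨1, one_mem Q, q, hq, by rw [one_mul]⟩
      have h2 : diagOp (f * q) ↑pu ∈ E2 := hinv (f * q) (hpatL q hq) _ pu.2
      rw [hu', map_sub]
      exact sub_mem h1 h2
    have hzero : diagOp (f * q) u' = 0 := by
      have hself : ⟪diagOp (f * q) u', diagOp (f * q) u'⟫_ℂ = 0 := by
        rw [diagOp_inner, inner_eq_zero_symm]
        apply hu'perp
        have hst : star (f * q) = star q * f := by rw [star_mul, hsa]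
        rw [hst]
        refine hinv (star q * f) ?_ _ hmem
        intro c hc d hd
        exact ⟨star q * f * c, mul_mem (mul_mem (star_mem hq) hfQ) hc, d, hd,
          by simp only [mul_assoc]⟩
      exact inner_self_eq_zero.1 hself
    constructor
    · have := congrArg WithLp.fst hzero
      rwa [diagOp_fst] at this
    · have := congrArg WithLp.snd hzero
      rwa [diagOp_snd] at this
  -- components of u' vanish
  have hfst : u'.fst = 0 := by
    apply hdense
    intro q hq ζ
    have h1 : ⟪q (f ζ), u'.fst⟫_ℂ = ⟪f ζ, (ContinuousLinearMap.adjoint q) u'.fst⟫_ℂ :=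
      (ContinuousLinearMap.adjoint_inner_right q (f ζ) u'.fst).symm
    have h2 : ⟪f ζ, (ContinuousLinearMap.adjoint q) u'.fst⟫_ℂ
        = ⟪ζ, f ((ContinuousLinearMap.adjoint q) u'.fst)⟫_ℂ := by
      have : (ContinuousLinearMap.adjoint f) = f := by
        rw [← ContinuousLinearMap.star_eq_adjoint, hsa]
      conv_rhs => rw [← this]
      exact (ContinuousLinearMap.adjoint_inner_right f ζ _).symm
    have h3 : f ((ContinuousLinearMap.adjoint q) u'.fst) = (f * star q) u'.fst := by
      rw [ContinuousLinearMap.star_eq_adjoint]; rfl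
    rw [h1, h2, h3, (hkey (star q) (star_mem hq)).1, inner_zero_right]
  have hsnd : u'.snd = 0 := by
    apply hdense
    intro q hq ζ
    have h1 : ⟪q (f ζ), u'.snd⟫_ℂ = ⟪f ζ, (ContinuousLinearMap.adjoint q) u'.snd⟫_ℂ :=
      (ContinuousLinearMap.adjoint_inner_right q (f ζ) u'.snd).symm
    have h2 : ⟪f ζ, (ContinuousLinearMap.adjoint q) u'.snd⟫_ℂ
        = ⟪ζ, f ((ContinuousLinearMap.adjoint q) u'.snd)⟫_ℂ := by
      have : (ContinuousLinearMap.adjoint f) = f := by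
        rw [← ContinuousLinearMap.star_eq_adjoint, hsa]
      conv_rhs => rw [← this]
      exact (ContinuousLinearMap.adjoint_inner_right f ζ _).symm
    have h3 : f ((ContinuousLinearMap.adjoint q) u'.snd) = (f * star q) u'.snd := by
      rw [ContinuousLinearMap.star_eq_adjoint]; rfl
    rw [h1, h2, h3, (hkey (star q) (star_mem hq)).2, inner_zero_right]
  have huE2 : u ∈ E2 := by
    have : u' = 0 := h2ext (by rw [hfst]; rfl) (by rw [hsnd]; rfl)
    have h4 : u = ↑pu := by rwa [hu', sub_eq_zero] at this
    rw [h4]; exact pu.2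
  -- approximation
  rcases mem_closure_iff_approx (Submodule.span ℂ Sp) u huE2 ε hε with ⟨e, he, hnorm⟩
  -- every element of span Sp has the form diagOp w u
  have hchar : ∀ v ∈ Submodule.span ℂ Sp,
      ∃ w ∈ Submodule.span ℂ {g : H →L[ℂ] H | ∃ c ∈ Q, ∃ d ∈ Q, g = c * f * d},
        v = diagOp w u := by
    intro v hv
    induction hv using Submodule.span_induction with
    | mem x hx =>
      rcases hx with ⟨c, hc, d, hd, rfl⟩
      exact ⟨c * f * d, Submodule.subset_span ⟨c, hc, d, hd, rfl⟩, rfl⟩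
    | zero =>
      refine ⟨0, zero_mem _, ?_⟩
      refine h2ext ?_ ?_ <;> simp [diagOp_fst, diagOp_snd]
    | add x y hx hy ihx ihy =>
      rcases ihx with ⟨w, hw, rfl⟩
      rcases ihy with ⟨w', hw', rfl⟩
      refine ⟨w + w', add_mem hw hw', ?_⟩
      refine h2ext ?_ ?_
      · rw [h2_add_fst, diagOp_fst, diagOp_fst, diagOp_fst, ContinuousLinearMap.add_apply]
      · rw [diagOp_snd, ContinuousLinearMap.add_apply]; rfl
    | smul c x hx ih =>
      rcases ih with ⟨w, hw, rfl⟩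
      refine ⟨c • w, Submodule.smul_mem _ _ hw, ?_⟩
      refine h2ext ?_ ?_
      · rw [diagOp_fst, ContinuousLinearMap.smul_apply]; rfl
      · rw [diagOp_snd, ContinuousLinearMap.smul_apply]; rfl
  rcases hchar e he with ⟨w, hw, rfl⟩
  refine ⟨w, hw, ?_, ?_⟩
  · have h5 : ‖(u - diagOp w u).fst‖ ≤ ‖u - diagOp w u‖ := h2_norm_fst _
    rw [h2_sub_fst, diagOp_fst, hufst] at h5
    rw [norm_sub_rev]
    exact lt_of_le_of_lt h5 hnorm
  · have h5 : ‖(u - diagOp w u).snd‖ ≤ ‖u - diagOp w u‖ := h2_norm_snd _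
    rw [h2_sub_snd, diagOp_snd, husnd] at h5
    rw [norm_sub_rev]
    exact lt_of_le_of_lt h5 hnorm

/-- The corner algebra condition set is closed under multiplication. -/
lemma s0_mul (R Q : VonNeumannAlgebra H) (f : H →L[ℂ] H)
    (hfQ : f ∈ Q) (hidem : f * f = f) (hsa : star f = f)
    (hdense : ∀ w : H, (∀ q ∈ Q, ∀ ζ : H, ⟪q (f ζ), w⟫_ℂ = 0) → w = 0)
    (x y : H →L[ℂ] H)
    (hx : ∀ a ∈ Q, ∀ b ∈ Q, f * a * x * b * f ∈ (R : Set (H →L[ℂ] H)))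
    (hy : ∀ a ∈ Q, ∀ b ∈ Q, f * a * y * b * f ∈ (R : Set (H →L[ℂ] H))) :
    ∀ a ∈ Q, ∀ b ∈ Q, f * a * (x * y) * b * f ∈ (R : Set (H →L[ℂ] H)) := by
  have collapse : ∀ X : H →L[ℂ] H, f * (f * X) = f * X := fun X => by
    rw [← mul_assoc, hidem]
  intro a ha b hb
  set A := f * a * x with hA
  set B := y * b * f with hB
  have hT : f * a * (x * y) * b * f = A * B := by
    rw [hA, hB]; simp only [mul_assoc]
  rw [hT, ← R.centralizer_centralizer]
  intro r hr
  refine ContinuousLinearMap.ext fun v => ?_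
  simp only [ContinuousLinearMap.mul_apply]
  have key : r (A (B v)) - A (B (r v)) = 0 := by
    apply norm_eq_zero_of_forall_le (C := ‖r‖ * ‖A‖ + ‖A‖) (by positivity)
    intro ε hε
    rcases approx_QfQ Q f hfQ hsa hdense (B v) (B (r v)) ε hε with ⟨w, hwspan, hw1, hw2⟩
    have hAwB : A * w * B ∈ (R : Set (H →L[ℂ] H)) := by
      clear hw1 hw2
      induction hwspan using Submodule.span_induction with
      | mem g hg =>
        rcases hg with ⟨c, hc, d, hd, rfl⟩
        have heq : A * (c * f * d) * B = (f * a * x * c * f) * (f * d * y * b * f) := by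
          rw [hA, hB]; simp only [mul_assoc, collapse]
        rw [heq]
        exact mul_mem (hx a ha c hc) (hy d hd b hb)
      | zero => rw [mul_zero, zero_mul]; exact zero_mem R
      | add w w' hw hw' ihw ihw' =>
        rw [mul_add, add_mul]; exact add_mem ihw ihw'
      | smul c w hw ih =>
        rw [mul_smul_comm, smul_mul_assoc]
        exact R.toStarSubalgebra.smul_mem ih c
    have hcomm := ContinuousLinearMap.ext_iff.1 (hr _ hAwB) v
    simp only [ContinuousLinearMap.mul_apply] at hcomm
    -- hcomm : r (A (w (B v))) = A (w (B (r v)))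
    have e1 : ‖r (A (B v)) - r (A (w (B v)))‖ ≤ ‖r‖ * ‖A‖ * ε := by
      have : r (A (B v)) - r (A (w (B v))) = r (A (B v - w (B v))) := by
        rw [map_sub, map_sub]
      rw [this]
      calc ‖r (A (B v - w (B v)))‖ ≤ ‖r‖ * ‖A (B v - w (B v))‖ := r.le_opNorm _
        _ ≤ ‖r‖ * (‖A‖ * ‖B v - w (B v)‖) :=
            mul_le_mul_of_nonneg_left (A.le_opNorm _) (norm_nonneg r)
        _ ≤ ‖r‖ * ‖A‖ * ε := by
            rw [mul_assoc]
            refine mul_le_mul_of_nonneg_left ?_ (norm_nonneg r)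
            refine mul_le_mul_of_nonneg_left ?_ (norm_nonneg A)
            rw [norm_sub_rev]; exact hw1.le
    have e2 : ‖A (w (B (r v))) - A (B (r v))‖ ≤ ‖A‖ * ε := by
      have : A (w (B (r v))) - A (B (r v)) = A (w (B (r v)) - B (r v)) := by rw [map_sub]
      rw [this]
      calc ‖A (w (B (r v)) - B (r v))‖ ≤ ‖A‖ * ‖w (B (r v)) - B (r v)‖ := A.le_opNorm _
        _ ≤ ‖A‖ * ε := mul_le_mul_of_nonneg_left hw2.le (norm_nonneg A)
    calc ‖r (A (B v)) - A (B (r v))‖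
        ≤ ‖r (A (B v)) - r (A (w (B v)))‖ + ‖r (A (w (B v))) - A (B (r v))‖ :=
          norm_sub_le_norm_sub_add_norm_sub _ _ _
      _ = ‖r (A (B v)) - r (A (w (B v)))‖ + ‖A (w (B (r v))) - A (B (r v))‖ := by
          rw [hcomm]
      _ ≤ ‖r‖ * ‖A‖ * ε + ‖A‖ * ε := add_le_add e1 e2
      _ = (‖r‖ * ‖A‖ + ‖A‖) * ε := by ring
  have := sub_eq_zero.1 key
  exact this

section proj12
variable (H)
noncomputable def pi1 : WithLp 2 (H × H) →L[ℂ] H :=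
  (ContinuousLinearMap.fst ℂ H H) ∘L (WithLp.prodContinuousLinearEquiv 2 ℂ H H).toContinuousLinearMap
noncomputable def pi2 : WithLp 2 (H × H) →L[ℂ] H :=
  (ContinuousLinearMap.snd ℂ H H) ∘L (WithLp.prodContinuousLinearEquiv 2 ℂ H H).toContinuousLinearMap
noncomputable def io1 : H →L[ℂ] WithLp 2 (H × H) :=
  (WithLp.prodContinuousLinearEquiv 2 ℂ H H).symm.toContinuousLinearMap ∘L
    (ContinuousLinearMap.inl ℂ H H)
noncomputable def io2 : H →L[ℂ] WithLp 2 (H × H) :=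
  (WithLp.prodContinuousLinearEquiv 2 ℂ H H).symm.toContinuousLinearMap ∘L
    (ContinuousLinearMap.inr ℂ H H)
end proj12

lemma pi1_apply (u : WithLp 2 (H × H)) : pi1 H u = u.fst := rfl
lemma pi2_apply (u : WithLp 2 (H × H)) : pi2 H u = u.snd := rfl
lemma io1_fst (a : H) : (io1 H a).fst = a := rfl
lemma io1_snd (a : H) : (io1 H a).snd = 0 := rfl
lemma io2_fst (a : H) : (io2 H a).fst = 0 := rfl
lemma io2_snd (a : H) : (io2 H a).snd = a := rfl

lemma h2decomp (w : WithLp 2 (H × H)) : w = io1 H w.fst + io2 H w.snd := by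
  refine h2ext ?_ ?_
  · rw [h2_add_fst, io1_fst, io2_fst, add_zero]
  · show w.snd = (io1 H w.fst).snd + (io2 H w.snd).snd
    rw [io1_snd, io2_snd, zero_add]

lemma diag_io1 (s : H →L[ℂ] H) (a : H) : diagOp s (io1 H a) = io1 H (s a) := by
  refine h2ext ?_ ?_
  · rw [diagOp_fst, io1_fst, io1_fst]
  · rw [diagOp_snd, io1_snd, io1_snd, map_zero]

lemma diag_io2 (s : H →L[ℂ] H) (a : H) : diagOp s (io2 H a) = io2 H (s a) := by
  refine h2ext ?_ ?_
  · rw [diagOp_fst, io2_fst, io2_fst, map_zero]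
  · rw [diagOp_snd, io2_snd, io2_snd]

lemma pi1_diag (s : H →L[ℂ] H) (u : WithLp 2 (H × H)) : pi1 H (diagOp s u) = s (pi1 H u) := rfl
lemma pi2_diag (s : H →L[ℂ] H) (u : WithLp 2 (H × H)) : pi2 H (diagOp s u) = s (pi2 H u) := rfl

/-- Core bicommutant-style lemma: every element of the double centralizer of `S₀`
has its compression `f x f` commuting with the commutant of `R`. -/
lemma bicomm_corner (R Q : VonNeumannAlgebra H) (f : H →L[ℂ] H)
    (hfQ : f ∈ Q) (hidem : f * f = f) (hsa : star f = f)
    (hdense : ∀ w : H, (∀ q ∈ Q, ∀ ζ : H, ⟪q (f ζ), w⟫_ℂ = 0) → w = 0)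
    (S0 : Set (H →L[ℂ] H))
    (hS0 : S0 = {z | ∀ a ∈ Q, ∀ b ∈ Q, f * a * z * b * f ∈ (R : Set (H →L[ℂ] H))})
    (hone : (1 : H →L[ℂ] H) ∈ S0)
    (x : H →L[ℂ] H) (hx : x ∈ Set.centralizer (Set.centralizer S0))
    (r : H →L[ℂ] H) (hr : r ∈ Set.centralizer (R : Set (H →L[ℂ] H))) :
    r * (f * x * f) = (f * x * f) * r := by
  classical
  -- closure properties of S0
  have hmulS : ∀ s ∈ S0, ∀ t ∈ S0, s * t ∈ S0 := by
    intro s hs t ht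
    rw [hS0] at hs ht ⊢
    exact s0_mul R Q f hfQ hidem hsa hdense s t hs ht
  have haddS : ∀ s ∈ S0, ∀ t ∈ S0, s + t ∈ S0 := by
    intro s hs t ht
    rw [hS0] at hs ht ⊢
    intro a ha b hb
    have heq : f * a * (s + t) * b * f = f * a * s * b * f + f * a * t * b * f := by
      rw [mul_add, add_mul, add_mul]
    rw [heq]
    exact add_mem (hs a ha b hb) (ht a ha b hb)
  have hsmulS : ∀ (c : ℂ), ∀ s ∈ S0, c • s ∈ S0 := by
    intro c s hs
    rw [hS0] at hs ⊢
    intro a ha b hb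
    have heq : f * a * (c • s) * b * f = c • (f * a * s * b * f) := by
      rw [mul_smul_comm, smul_mul_assoc, smul_mul_assoc]
    rw [heq]
    exact R.toStarSubalgebra.smul_mem (hs a ha b hb) c
  have hzeroS : (0 : H →L[ℂ] H) ∈ S0 := by
    rw [hS0]
    intro a ha b hb
    have heq : f * a * (0 : H →L[ℂ] H) * b * f = 0 := by
      rw [mul_zero, zero_mul, zero_mul]
    rw [heq]
    exact zero_mem R
  have hstarS : ∀ s ∈ S0, star s ∈ S0 := by
    intro s hs
    rw [hS0] at hs ⊢
    intro a ha b hb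
    have heq : f * a * star s * b * f = star (f * star b * s * star a * f) := by
      simp only [star_mul, star_star, hsa, mul_assoc]
    rw [heq]
    exact star_mem (hs (star b) (star_mem hb) (star a) (star_mem ha))
  -- set up the two-fold amplification
  refine ContinuousLinearMap.ext fun v => ?_
  simp only [ContinuousLinearMap.mul_apply]
  set u : WithLp 2 (H × H) := (WithLp.equiv 2 (H × H)).symm (f v, f (r v)) with hu
  have hufst : u.fst = f v := rfl
  have husnd : u.snd = f (r v) := rfl
  set Es : Submodule ℂ (WithLp 2 (H × H)) :=
    { carrier := {w | ∃ s ∈ S0, w = diagOp s u}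
      add_mem' := by
        rintro w w' ⟨s, hs, rfl⟩ ⟨s', hs', rfl⟩
        refine ⟨s + s', haddS s hs s' hs', ?_⟩
        refine h2ext ?_ ?_
        · rw [h2_add_fst, diagOp_fst, diagOp_fst, diagOp_fst, ContinuousLinearMap.add_apply]
        · rw [diagOp_snd, ContinuousLinearMap.add_apply]; rfl
      zero_mem' := by
        refine ⟨0, hzeroS, ?_⟩
        refine h2ext ?_ ?_
        · rw [diagOp_fst, ContinuousLinearMap.zero_apply]; rfl
        · rw [diagOp_snd, ContinuousLinearMap.zero_apply]; rfl
      smul_mem' := by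
        rintro c w ⟨s, hs, rfl⟩
        refine ⟨c • s, hsmulS c s hs, ?_⟩
        refine h2ext ?_ ?_
        · rw [diagOp_fst, ContinuousLinearMap.smul_apply]; rfl
        · rw [diagOp_snd, ContinuousLinearMap.smul_apply]; rfl } with hEs
  have hEs_mem : ∀ s ∈ S0, diagOp s u ∈ Es := fun s hs => ⟨s, hs, rfl⟩
  set E : Submodule ℂ (WithLp 2 (H × H)) := Es.topologicalClosure with hE
  haveI : CompleteSpace E := (Submodule.isClosed_topologicalClosure _).completeSpace_coe
  set PE : WithLp 2 (H × H) →L[ℂ] WithLp 2 (H × H) :=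
    E.subtypeL ∘L Submodule.orthogonalProjection E with hPE
  have hPEapp : ∀ w, PE w = ↑(Submodule.orthogonalProjection E w) := fun _ => rfl
  have hPEmem : ∀ w, PE w ∈ E := fun w => (Submodule.orthogonalProjection E w).2
  have hPEfix : ∀ w ∈ E, PE w = w := fun w hw => Submodule.starProjection_eq_self_iff.2 hw
  have hEinv : ∀ s ∈ S0, ∀ w ∈ E, diagOp s w ∈ E := by
    intro s hs
    apply clm_closure_invariant
    rintro w ⟨t, ht, rfl⟩
    rw [diagOp_mul]
    exact Submodule.le_topologicalClosure _ (hEs_mem _ (hmulS s hs t ht))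
  have hcommPE : ∀ s ∈ S0, ∀ w, PE (diagOp s w) = diagOp s (PE w) := by
    intro s hs w
    exact proj_comm E (diagOp s) (diagOp (star s)) (fun a b => diagOp_inner s a b)
      (hEinv s hs) (hEinv (star s) (hstarS s hs)) w
  -- the matrix entries of PE centralize S0, so they commute with x
  have hcent : ∀ (pi : WithLp 2 (H × H) →L[ℂ] H) (io : H →L[ℂ] WithLp 2 (H × H)),
      (∀ (s' : H →L[ℂ] H) (uu), pi (diagOp s' uu) = s' (pi uu)) →
      (∀ (s' : H →L[ℂ] H) (a : H), diagOp s' (io a) = io (s' a)) →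
      ∀ a : H, (pi ∘L PE ∘L io) (x a) = x ((pi ∘L PE ∘L io) a) := by
    intro pi io hpi hio
    have hmem : (pi ∘L PE ∘L io) ∈ Set.centralizer S0 := by
      intro s hs
      refine ContinuousLinearMap.ext fun w => ?_
      simp only [ContinuousLinearMap.mul_apply, ContinuousLinearMap.comp_apply]
      rw [← hpi s, ← hcommPE s hs, hio]
    have := hx _ hmem
    intro a
    have h := ContinuousLinearMap.ext_iff.1 this a
    simpa only [ContinuousLinearMap.mul_apply] using h
  have hc1 : ∀ a : H, (pi1 H ∘L PE ∘L io1 H) (x a) = x ((pi1 H ∘L PE ∘L io1 H) a) :=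
    hcent (pi1 H) (io1 H) (fun s' uu => pi1_diag s' uu) (fun s' a => diag_io1 s' a)
  have hc2 : ∀ a : H, (pi2 H ∘L PE ∘L io1 H) (x a) = x ((pi2 H ∘L PE ∘L io1 H) a) :=
    hcent (pi2 H) (io1 H) (fun s' uu => pi2_diag s' uu) (fun s' a => diag_io1 s' a)
  have hc3 : ∀ a : H, (pi1 H ∘L PE ∘L io2 H) (x a) = x ((pi1 H ∘L PE ∘L io2 H) a) :=
    hcent (pi1 H) (io2 H) (fun s' uu => pi1_diag s' uu) (fun s' a => diag_io2 s' a)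
  have hc4 : ∀ a : H, (pi2 H ∘L PE ∘L io2 H) (x a) = x ((pi2 H ∘L PE ∘L io2 H) a) :=
    hcent (pi2 H) (io2 H) (fun s' uu => pi2_diag s' uu) (fun s' a => diag_io2 s' a)
  -- PE commutes with diagOp x
  have hPEx1 : ∀ a : H, PE (io1 H (x a)) = diagOp x (PE (io1 H a)) := by
    intro a
    refine h2ext ?_ ?_
    · have h1 := hc1 a
      simp only [ContinuousLinearMap.comp_apply] at h1
      rw [diagOp_fst, ← pi1_apply, ← pi1_apply, h1]
    · have h2 := hc2 a
      simp only [ContinuousLinearMap.comp_apply] at h2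
      rw [diagOp_snd, ← pi2_apply, ← pi2_apply, h2]
  have hPEx2 : ∀ a : H, PE (io2 H (x a)) = diagOp x (PE (io2 H a)) := by
    intro a
    refine h2ext ?_ ?_
    · have h1 := hc3 a
      simp only [ContinuousLinearMap.comp_apply] at h1
      rw [diagOp_fst, ← pi1_apply, ← pi1_apply, h1]
    · have h2 := hc4 a
      simp only [ContinuousLinearMap.comp_apply] at h2
      rw [diagOp_snd, ← pi2_apply, ← pi2_apply, h2]
  have hPEx : ∀ w, PE (diagOp x w) = diagOp x (PE w) := by
    intro w
    have hd := h2decomp (H := H) w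
    calc PE (diagOp x w) = PE (diagOp x (io1 H w.fst + io2 H w.snd)) := by rw [← hd]
      _ = PE (io1 H (x w.fst)) + PE (io2 H (x w.snd)) := by
          rw [map_add, diag_io1, diag_io2, map_add]
      _ = diagOp x (PE (io1 H w.fst)) + diagOp x (PE (io2 H w.snd)) := by
          rw [hPEx1, hPEx2]
      _ = diagOp x (PE (io1 H w.fst + io2 H w.snd)) := by rw [map_add, map_add]
      _ = diagOp x (PE w) := by rw [← hd]
  -- u is in E, hence diagOp x u ∈ E
  have huE : u ∈ E := by
    apply Submodule.le_topologicalClosure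
    refine ⟨1, hone, ?_⟩
    refine h2ext ?_ ?_
    · rw [diagOp_fst, ContinuousLinearMap.one_apply]
    · rw [diagOp_snd, ContinuousLinearMap.one_apply]
  have hdxu : diagOp x u ∈ E := by
    rw [← hPEfix u huE, ← hPEx]
    exact hPEmem _
  -- final approximation argument
  have key : r (f (x (f v))) - f (x (f (r v))) = 0 := by
    apply norm_eq_zero_of_forall_le (C := ‖r‖ * ‖f‖ + ‖f‖) (by positivity)
    intro ε hε
    rcases mem_closure_iff_approx Es (diagOp x u) hdxu ε hε with ⟨e, he, hn⟩
    rcases he with ⟨s, hs, rfl⟩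
    have hn1 : ‖x (f v) - s (f v)‖ ≤ ε := by
      have h5 : ‖(diagOp x u - diagOp s u).fst‖ ≤ ‖diagOp x u - diagOp s u‖ := h2_norm_fst _
      rw [h2_sub_fst, diagOp_fst, diagOp_fst, hufst] at h5
      exact h5.trans hn.le
    have hn2 : ‖x (f (r v)) - s (f (r v))‖ ≤ ε := by
      have h5 : ‖(diagOp x u - diagOp s u).snd‖ ≤ ‖diagOp x u - diagOp s u‖ := h2_norm_snd _
      rw [h2_sub_snd, diagOp_snd, diagOp_snd, husnd] at h5
      exact h5.trans hn.le
    have hsR : f * s * f ∈ (R : Set (H →L[ℂ] H)) := by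
      rw [hS0] at hs
      have := hs 1 (one_mem Q) 1 (one_mem Q)
      rwa [mul_one, mul_one] at this
    have hcm := hr _ hsR
    have hcmv := ContinuousLinearMap.ext_iff.1 hcm (v)
    simp only [ContinuousLinearMap.mul_apply] at hcmv
    -- hcmv : f (s (f (r v))) = r (f (s (f v)))
    have e1 : ‖r (f (x (f v))) - r (f (s (f v)))‖ ≤ ‖r‖ * ‖f‖ * ε := by
      have heq : r (f (x (f v))) - r (f (s (f v))) = r (f (x (f v) - s (f v))) := by
        rw [map_sub, map_sub]
      rw [heq]
      calc ‖r (f (x (f v) - s (f v)))‖ ≤ ‖r‖ * ‖f (x (f v) - s (f v))‖ := r.le_opNorm _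
        _ ≤ ‖r‖ * (‖f‖ * ‖x (f v) - s (f v)‖) :=
            mul_le_mul_of_nonneg_left (f.le_opNorm _) (norm_nonneg r)
        _ ≤ ‖r‖ * ‖f‖ * ε := by
            rw [mul_assoc]
            exact mul_le_mul_of_nonneg_left
              (mul_le_mul_of_nonneg_left hn1 (norm_nonneg f)) (norm_nonneg r)
    have e2 : ‖f (s (f (r v))) - f (x (f (r v)))‖ ≤ ‖f‖ * ε := by
      have heq : f (s (f (r v))) - f (x (f (r v))) = f (s (f (r v)) - x (f (r v))) := by
        rw [map_sub]
      rw [heq]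
      calc ‖f (s (f (r v)) - x (f (r v)))‖ ≤ ‖f‖ * ‖s (f (r v)) - x (f (r v))‖ :=
            f.le_opNorm _
        _ ≤ ‖f‖ * ε := by
            refine mul_le_mul_of_nonneg_left ?_ (norm_nonneg f)
            rw [norm_sub_rev]; exact hn2
    calc ‖r (f (x (f v))) - f (x (f (r v)))‖
        ≤ ‖r (f (x (f v))) - r (f (s (f v)))‖ + ‖r (f (s (f v))) - f (x (f (r v)))‖ :=
          norm_sub_le_norm_sub_add_norm_sub _ _ _
      _ = ‖r (f (x (f v))) - r (f (s (f v)))‖ + ‖f (s (f (r v))) - f (x (f (r v)))‖ := by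
          rw [← hcmv]
      _ ≤ ‖r‖ * ‖f‖ * ε + ‖f‖ * ε := add_le_add e1 e2
      _ = (‖r‖ * ‖f‖ + ‖f‖) * ε := by ring
  exact sub_eq_zero.1 key
lemma cornerSet_mono {f : H →L[ℂ] H} {S T : Set (H →L[ℂ] H)} (h : S ⊆ T) :
    cornerSet f S ⊆ cornerSet f T := by
  rintro w ⟨y, hy, rfl⟩
  exact ⟨y, h hy, rfl⟩

lemma cornerSet_subset_self (W : VonNeumannAlgebra H) {f : H →L[ℂ] H} (hf : f ∈ W) :
    cornerSet f (W : Set (H →L[ℂ] H)) ⊆ (W : Set (H →L[ℂ] H)) := by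
  rintro w ⟨y, hy, rfl⟩
  exact mul_mem (mul_mem hf hy) hf

/-- The key generation statement for corners. -/
lemma corner_generation (P P₁ P₂ Q : VonNeumannAlgebra H)
    (hQ₁ : (Q : Set (H →L[ℂ] H)) ⊆ (P₁ : Set (H →L[ℂ] H)))
    (hQ₂ : (Q : Set (H →L[ℂ] H)) ⊆ (P₂ : Set (H →L[ℂ] H)))
    (hgen : ∀ R : VonNeumannAlgebra H, (P₁ : Set (H →L[ℂ] H)) ⊆ (R : Set (H →L[ℂ] H)) →
      (P₂ : Set (H →L[ℂ] H)) ⊆ (R : Set (H →L[ℂ] H)) →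
      (P : Set (H →L[ℂ] H)) ⊆ (R : Set (H →L[ℂ] H)))
    (f : H →L[ℂ] H) (hfQ : f ∈ Q) (hidem : f * f = f) (hsa : star f = f)
    (hcf : ∀ z : H →L[ℂ] H, IsProjectionIn (Q : Set (H →L[ℂ] H)) z →
      (∀ y ∈ Q, z * y = y * z) → f * z = f → z = 1)
    (R : VonNeumannAlgebra H)
    (h1 : cornerSet f (P₁ : Set (H →L[ℂ] H)) ⊆ (R : Set (H →L[ℂ] H)))
    (h2 : cornerSet f (P₂ : Set (H →L[ℂ] H)) ⊆ (R : Set (H →L[ℂ] H))) :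
    cornerSet f (P : Set (H →L[ℂ] H)) ⊆ (R : Set (H →L[ℂ] H)) := by
  classical
  have hdense : ∀ w : H, (∀ q ∈ Q, ∀ ζ : H, ⟪q (f ζ), w⟫_ℂ = 0) → w = 0 :=
    dense_Qf Q f hfQ hidem hsa hcf
  set S0 : Set (H →L[ℂ] H) :=
    {z | ∀ a ∈ Q, ∀ b ∈ Q, f * a * z * b * f ∈ (R : Set (H →L[ℂ] H))} with hS0
  have hstarS : ∀ s ∈ S0, star s ∈ S0 := by
    intro s hs a ha b hb
    have heq : f * a * star s * b * f = star (f * star b * s * star a * f) := by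
      simp only [star_mul, star_star, hsa, mul_assoc]
    rw [heq]
    exact star_mem (hs (star b) (star_mem hb) (star a) (star_mem ha))
  have hone : (1 : H →L[ℂ] H) ∈ S0 := by
    intro a ha b hb
    have heq : f * a * 1 * b * f = f * (a * b) * f := by
      rw [mul_one, mul_assoc f a b]
    rw [heq]
    exact h1 ⟨a * b, hQ₁ (mul_mem ha hb), rfl⟩
  -- the von Neumann algebra generated as a double centralizer
  set S : VonNeumannAlgebra H :=
    { carrier := Set.centralizer (Set.centralizer S0)
      mul_mem' := fun ha hb => Set.mul_mem_centralizer ha hb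
      add_mem' := fun ha hb => Set.add_mem_centralizer ha hb
      algebraMap_mem' := fun c m _ => (Algebra.commutes c m).symm
      star_mem' := fun hx => Set.star_mem_centralizer'
        (fun a ha => Set.star_mem_centralizer' hstarS ha) hx
      centralizer_centralizer' := Set.centralizer_centralizer_centralizer _ } with hS
  have hsubS0 : ∀ (W : VonNeumannAlgebra H),
      (Q : Set (H →L[ℂ] H)) ⊆ (W : Set (H →L[ℂ] H)) →
      cornerSet f (W : Set (H →L[ℂ] H)) ⊆ (R : Set (H →L[ℂ] H)) →
      (W : Set (H →L[ℂ] H)) ⊆ S0 := by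
    intro W hQW hcorner z hz a ha b hb
    have heq : f * a * z * b * f = f * (a * z * b) * f := by
      simp only [mul_assoc]
    rw [heq]
    exact hcorner ⟨a * z * b, mul_mem (mul_mem (hQW ha) hz) (hQW hb), rfl⟩
  have hP₁S : (P₁ : Set (H →L[ℂ] H)) ⊆ (S : Set (H →L[ℂ] H)) := fun z hz =>
    Set.subset_centralizer_centralizer (hsubS0 P₁ hQ₁ h1 hz)
  have hP₂S : (P₂ : Set (H →L[ℂ] H)) ⊆ (S : Set (H →L[ℂ] H)) := fun z hz =>
    Set.subset_centralizer_centralizer (hsubS0 P₂ hQ₂ h2 hz)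
  have hPS := hgen S hP₁S hP₂S
  rintro w ⟨y, hy, rfl⟩
  rw [← R.centralizer_centralizer]
  intro r hr
  exact bicomm_corner R Q f hfQ hidem hsa hdense S0 hS0 hone y (hPS hy) r hr

lemma corner_condExp {Pset Qset : Set (H →L[ℂ] H)} {E : (H →L[ℂ] H) → (H →L[ℂ] H)}
    (h : IsCondExp Pset Qset E)
    (hPmul : ∀ a ∈ Pset, ∀ b ∈ Pset, a * b ∈ Pset)
    (hQmul : ∀ a ∈ Qset, ∀ b ∈ Qset, a * b ∈ Qset)
    (f : H →L[ℂ] H) (hfQ : f ∈ Qset) :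
    IsCondExp (cornerSet f Pset) (cornerSet f Qset) E := by
  obtain ⟨h1, h2, h3, h4, h5, h6, h7, h8, h9⟩ := h
  refine ⟨cornerSet_mono h1, ?_, ?_, h4, h5, h6, h7, ?_, ?_⟩
  · rintro x ⟨y, hy, rfl⟩
    exact ⟨E y, h2 y hy, h8 f hfQ y f hfQ⟩
  · rintro y ⟨q, hq, rfl⟩
    exact h3 _ (hQmul _ (hQmul f hfQ q hq) f hfQ)
  · rintro a ⟨qa, hqa, rfl⟩ x b ⟨qb, hqb, rfl⟩
    exact h8 _ (hQmul _ (hQmul f hfQ qa hqa) f hfQ) x _ (hQmul _ (hQmul f hfQ qb hqb) f hfQ)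
  · rintro x ⟨y, hy, rfl⟩
    exact h9 _ (hPmul _ (hPmul f (h1 hfQ) y hy) f (h1 hfQ))

/-- if `f ∈ Q` is a projection with central support `1` in `Q`, then
`(fPf, F|) = (fP₁f, F₁|) ⋆_{fQf} (fP₂f, F₂|)` canonically. -/
theorem stmt10 (P P₁ P₂ Q : VonNeumannAlgebra H) (F F₁ F₂ : (H →L[ℂ] H) → (H →L[ℂ] H))
    (hAFP : IsAFP (P : Set (H →L[ℂ] H)) (P₁ : Set (H →L[ℂ] H)) (P₂ : Set (H →L[ℂ] H))
      (Q : Set (H →L[ℂ] H)) F F₁ F₂)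
    (f : H →L[ℂ] H) (hf : IsProjectionIn (Q : Set (H →L[ℂ] H)) f)
    (hcf : ∀ z : H →L[ℂ] H, IsProjectionIn (Q : Set (H →L[ℂ] H)) z →
      (∀ y ∈ Q, z * y = y * z) → f * z = f → z = 1) :
    IsAFP (cornerSet f (P : Set (H →L[ℂ] H))) (cornerSet f (P₁ : Set (H →L[ℂ] H)))
      (cornerSet f (P₂ : Set (H →L[ℂ] H))) (cornerSet f (Q : Set (H →L[ℂ] H)))
      F F₁ F₂ := by
  obtain ⟨hQP₁, hQP₂, hP₁P, hP₂P, hgen, hFP, hF₁, hF₂, hres₁, hres₂, hfree⟩ := hAFP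
  obtain ⟨hfQ, hfidem, hfsa⟩ := hf
  have hmul : ∀ (W : VonNeumannAlgebra H), ∀ a ∈ (W : Set (H →L[ℂ] H)),
      ∀ b ∈ (W : Set (H →L[ℂ] H)), a * b ∈ (W : Set (H →L[ℂ] H)) :=
    fun W a ha b hb => mul_mem ha hb
  refine ⟨cornerSet_mono hQP₁, cornerSet_mono hQP₂, cornerSet_mono hP₁P,
    cornerSet_mono hP₂P, ?_, ?_, ?_, ?_, ?_, ?_, ?_⟩
  · -- generation
    intro R hR1 hR2
    exact corner_generation P P₁ P₂ Q hQP₁ hQP₂ hgen f hfQ hfidem hfsa hcf R hR1 hR2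
  · exact corner_condExp hFP (hmul P) (hmul Q) f hfQ
  · exact corner_condExp hF₁ (hmul P₁) (hmul Q) f hfQ
  · exact corner_condExp hF₂ (hmul P₂) (hmul Q) f hfQ
  · rintro x ⟨y, hy, rfl⟩
    exact hres₁ _ (mul_mem (mul_mem (hQP₁ hfQ) hy) (hQP₁ hfQ))
  · rintro x ⟨y, hy, rfl⟩
    exact hres₂ _ (mul_mem (mul_mem (hQP₂ hfQ) hy) (hQP₂ hfQ))
  · intro n x ε hn hx halt
    refine hfree n x ε hn ?_ halt
    intro i
    obtain ⟨hxi, hFi⟩ := hx i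
    refine ⟨?_, hFi⟩
    cases hεi : ε i with
    | true =>
      rw [hεi] at hxi
      simp only [if_true] at hxi ⊢
      try simp only [reduceIte] at hxi ⊢
      obtain ⟨y, hy, heq⟩ := hxi
      rw [heq]
      exact mul_mem (mul_mem (hQP₁ hfQ) hy) (hQP₁ hfQ)
    | false =>
      rw [hεi] at hxi
      simp only [Bool.false_eq_true, if_false] at hxi ⊢
      obtain ⟨y, hy, heq⟩ := hxi
      rw [heq]
      exact mul_mem (mul_mem (hQP₂ hfQ) hy) (hQP₂ hfQ)
end

section
/- Let M ⊇ N be von Neumann algebras with a faithful normal conditional expectation E : M → N, and suppose M₁, M₂ are intermediate subalgebras that are freely independent with amalgamation over N with respect to E, with E_k = E|_{M_k}. If x ∈ M₁ satisfies y(x − E₁(x)) = 0 for all y ∈ Ker(E₂) ∩ M₂, and there exists a family {y_i} in Ker(E₂)∩M₂ with Σ_i s(E₂(y_i* y_i)) = 1, then x = E₁(x) ∈ N. -/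
open scoped ComplexOrder

set_option maxHeartbeats 1000000
set_option synthInstance.maxHeartbeats 400000

variable {H : Type*} [NormedAddCommGroup H] [InnerProductSpace ℂ H] [CompleteSpace H]

/-- `s` is the support projection of the self-adjoint element `a` inside `Q`. -/
def IsSupportProjOf (Q : Set (H →L[ℂ] H)) (a s : H →L[ℂ] H) : Prop :=
  IsProjectionIn Q s ∧ a * s = a ∧ ∀ ξ : H, a ξ = 0 → s ξ = 0

theorem aux_sq_le (b : H →L[ℂ] H) (hb : 0 ≤ b) : b * b ≤ ‖b‖ • b := by
  obtain ⟨r, hrn, hr⟩ : ∃ r : H →L[ℂ] H, 0 ≤ r ∧ r * r = b :=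
    ⟨CFC.sqrt b, CFC.sqrt_nonneg (a := b), CFC.sqrt_mul_sqrt_self b hb⟩
  have hsa : star r = r := (IsSelfAdjoint.of_nonneg hrn).star_eq
  have h := CStarAlgebra.star_left_conjugate_le_norm_smul (a := r) (b := b)
    (IsSelfAdjoint.of_nonneg hb)
  rw [hsa] at h
  calc b * b = r * b * r := by rw [← hr]; noncomm_ring
    _ ≤ ‖b‖ • b := by rw [← hr] at h ⊢; simpa using h

/-- if `M₁`, `M₂` are freely independent over `N` with respect to `E`,
`x ∈ M₁` satisfies `y (x − E₁ x) = 0` for all `y ∈ Ker E₂ ∩ M₂`, and there is a family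
`{y i}` in `Ker E₂ ∩ M₂` whose support projections `s(E₂(yᵢ* yᵢ))` sum to `1`, then
`x = E₁(x) ∈ N`. -/
theorem stmt11 (M N M₁ M₂ : VonNeumannAlgebra H) (E : (H →L[ℂ] H) → (H →L[ℂ] H))
    (hNM₁ : (N : Set (H →L[ℂ] H)) ⊆ (M₁ : Set (H →L[ℂ] H)))
    (hNM₂ : (N : Set (H →L[ℂ] H)) ⊆ (M₂ : Set (H →L[ℂ] H)))
    (hM₁M : (M₁ : Set (H →L[ℂ] H)) ⊆ (M : Set (H →L[ℂ] H)))
    (hM₂M : (M₂ : Set (H →L[ℂ] H)) ⊆ (M : Set (H →L[ℂ] H)))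
    (hE : IsCondExp (M : Set (H →L[ℂ] H)) (N : Set (H →L[ℂ] H)) E)
    -- free independence with amalgamation over `N` with respect to `E`
    (hfree : ∀ (n : ℕ) (w : Fin n → (H →L[ℂ] H)) (ε : Fin n → Bool), n ≠ 0 →
      (∀ i, w i ∈ (if ε i then (M₁ : Set (H →L[ℂ] H)) else (M₂ : Set (H →L[ℂ] H))) ∧
        E (w i) = 0) →
      (∀ (i : ℕ) (h : i + 1 < n), ε ⟨i, Nat.lt_of_succ_lt h⟩ ≠ ε ⟨i + 1, h⟩) →
      E (List.ofFn w).prod = 0)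
    (x : H →L[ℂ] H) (hx : x ∈ M₁)
    (hxy : ∀ y ∈ M₂, E y = 0 → y * (x - E x) = 0)
    (I : Type) (y s : I → H →L[ℂ] H)
    (hy : ∀ i, y i ∈ M₂ ∧ E (y i) = 0)
    (hs : ∀ i, IsSupportProjOf (N : Set (H →L[ℂ] H)) (E (star (y i) * y i)) (s i))
    (hssum : ∀ ξ : H, (∀ i, s i ξ = 0) → ξ = 0) :
    x = E x ∧ x ∈ N := by
  obtain ⟨hQP, hEQ, hEid, hadd, hsmul, hstar, hpos, hbimod, hfaith⟩ := hE
  set z := x - E x with hzdef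
  have hE0 : E 0 = 0 := by simpa using hsmul 0 0
  have hsub : ∀ u v, E (u - v) = E u - E v := by
    intro u v
    have h : v + (u - v) = u := by abel
    have h2 := hadd v (u - v)
    rw [h] at h2
    rw [h2]; abel
  have hmono : ∀ u v : H →L[ℂ] H, u ≤ v → E u ≤ E v := by
    intro u v huv
    have h1 : E v - E u = E (v - u) := (hsub v u).symm
    have h2 : 0 ≤ E (v - u) := hpos _ (sub_nonneg.2 huv)
    rw [← h1] at h2
    exact sub_nonneg.mp h2
  have hsmulℝ : ∀ (r : ℝ) (u : H →L[ℂ] H), E (r • u) = r • E u := by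
    intro r u
    rw [← smul_one_smul ℂ r u, hsmul, smul_one_smul]
  have hEx : E x ∈ (N : Set (H →L[ℂ] H)) := hEQ x (hM₁M hx)
  have hEz : E z = 0 := by
    rw [hzdef, hsub, hEid _ hEx, sub_self]
  have hz₁ : z ∈ M₁ := sub_mem hx (hNM₁ hEx)
  have hzs₁ : star z ∈ M₁ := star_mem hz₁
  have hEzs : E (star z) = 0 := by rw [hstar, hEz, star_zero]
  -- main step: for each i, E(star (y i) * y i) * z = 0
  have hbz : ∀ i, E (star (y i) * y i) * z = 0 := by
    intro i
    obtain ⟨hyM, hyE⟩ := hy i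
    set b := E (star (y i) * y i) with hbdef
    have hyyM : star (y i) * y i ∈ M₂ := mul_mem (star_mem hyM) hyM
    have hbN : b ∈ (N : Set (H →L[ℂ] H)) := hEQ _ (hM₂M hyyM)
    have hb0 : 0 ≤ b := hpos _ (star_mul_self_nonneg _)
    have hbsa : star b = b := by
      rw [hbdef, ← hstar, star_mul, star_star]
    set c := star (y i) * y i - b with hcdef
    have hcM₂ : c ∈ M₂ := sub_mem hyyM (hNM₂ hbN)
    have hEc : E c = 0 := by rw [hcdef, hsub, hEid b hbN, sub_self]
    -- freeness applied to the alternating word (star z, c, z)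
    have hfree3 : E (star z * c * z) = 0 := by
      have h := hfree 3 ![star z, c, z] ![true, false, true] (by norm_num)
        (by
          intro j
          fin_cases j <;>
            simp only [Matrix.cons_val_zero, Matrix.cons_val_one, Matrix.head_cons,
              Matrix.cons_val_two, Matrix.tail_cons, if_true, if_false, Fin.isValue] <;>
            exact ⟨by assumption, by assumption⟩)
        (by
          intro j hj
          have hj2 : j < 2 := by omega
          interval_cases j <;> simp)
      simpa [List.ofFn_succ, mul_assoc] using h
    have hyz : y i * z = 0 := hxy (y i) hyM hyE
    have key : star z * (star (y i) * y i) * z = 0 := by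
      have h : star z * (star (y i) * y i) * z = star (y i * z) * (y i * z) := by
        rw [star_mul]; noncomm_ring
      rw [h, hyz]; simp
    have hEb : E (star z * b * z) = 0 := by
      have hsplit : star z * (star (y i) * y i) * z = star z * c * z + star z * b * z := by
        rw [hcdef]; noncomm_ring
      have h := congrArg E hsplit
      rw [key, hE0, hadd, hfree3, zero_add] at h
      exact h.symm
    -- conclude b * z = 0 via faithfulness
    have h1 : star z * (b * b) * z ≤ star z * (‖b‖ • b) * z :=
      star_left_conjugate_le_conjugate (aux_sq_le b hb0) z
    have h2 : star z * (‖b‖ • b) * z = ‖b‖ • (star z * b * z) := by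
      rw [mul_smul_comm, smul_mul_assoc]
    have h3 : E (star z * (b * b) * z) ≤ (0 : H →L[ℂ] H) := by
      have := hmono _ _ h1
      rwa [h2, hsmulℝ, hEb, smul_zero] at this
    have heq : star (b * z) * (b * z) = star z * (b * b) * z := by
      rw [star_mul, hbsa]; noncomm_ring
    have h5 : (0 : H →L[ℂ] H) ≤ E (star z * (b * b) * z) := by
      rw [← heq]; exact hpos _ (star_mul_self_nonneg _)
    have h6 : E (star (b * z) * (b * z)) = 0 := by
      rw [heq]; exact le_antisymm h3 h5
    exact hfaith (b * z) (hM₁M (mul_mem (hNM₁ hbN) hz₁)) h6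
  -- conclude z = 0
  have hz0 : z = 0 := by
    ext ξ
    simp only [ContinuousLinearMap.zero_apply]
    apply hssum
    intro i
    apply (hs i).2.2
    have h : (E (star (y i) * y i) * z) ξ = 0 := by rw [hbz i]; rfl
    simpa [ContinuousLinearMap.mul_apply] using h
  have hxE : x = E x := by
    have := sub_eq_zero.mp (hzdef ▸ hz0)
    exact this
  exact ⟨hxE, by rw [hxE]; exact hEx⟩
end

section
/- Let M be a von Neumann algebra, N ⊆ M a subalgebra, f ∈ N a projection with central support c_f^M = 1 in M, and let {v_i}_{i∈I} be partial isometries in N with Σ_i v_i* v_i = 1 and v_i v_i* ≤ f for all i. If z ∈ Z(N)^ω (the ultrapower of the center of N) satisfies that zf commutes with every element of fMf, then z commutes with every element of M; i.e., M'f ∩ Z(N)^ω f = (M' ∩ Z(N)^ω)f. -/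
open scoped ComplexOrder

variable {H : Type*} [NormedAddCommGroup H] [InnerProductSpace ℂ H] [CompleteSpace H]

lemma proj_contract (p : H →L[ℂ] H) (h1 : p * p = p) (h2 : star p = p) (ζ : H) :
    ‖p ζ‖ ≤ ‖ζ‖ := by
  have key : (inner ℂ ((star p * p) ζ) ζ : ℂ) = inner ℂ (p ζ) (p ζ) := by
    rw [ContinuousLinearMap.mul_apply, ContinuousLinearMap.star_eq_adjoint,
      ContinuousLinearMap.adjoint_inner_left]
  have h3 : ‖p ζ‖ ^ 2 = RCLike.re (inner ℂ (p ζ) ζ : ℂ) := by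
    rw [← inner_self_eq_norm_sq (𝕜 := ℂ) (p ζ), ← key, h2, h1]
  have h4 : RCLike.re (inner ℂ (p ζ) ζ : ℂ) ≤ ‖p ζ‖ * ‖ζ‖ :=
    le_trans (RCLike.re_le_norm _) (norm_inner_le_norm _ _)
  rcases eq_or_lt_of_le (norm_nonneg (p ζ)) with h0 | h0
  · rw [← h0]; exact norm_nonneg ζ
  · nlinarith

lemma pisom_contract (w : H →L[ℂ] H) (h : w * star w * w = w) (ζ : H) : ‖w ζ‖ ≤ ‖ζ‖ := by
  have hq1 : (star w * w) * (star w * w) = star w * w := by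
    have h2 : star w * (w * star w * w) = star w * w := by rw [h]
    calc (star w * w) * (star w * w) = star w * (w * star w * w) := by simp only [mul_assoc]
      _ = star w * w := h2
  have hq2 : star (star w * w) = star w * w := by simp [star_mul]
  have key : ‖w ζ‖ ^ 2 = RCLike.re (inner ℂ ((star w * w) ζ) ζ : ℂ) := by
    rw [ContinuousLinearMap.mul_apply, ContinuousLinearMap.star_eq_adjoint,
      ContinuousLinearMap.adjoint_inner_left, inner_self_eq_norm_sq (𝕜 := ℂ)]
  have h4 : RCLike.re (inner ℂ ((star w * w) ζ) ζ : ℂ) ≤ ‖(star w * w) ζ‖ * ‖ζ‖ :=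
    le_trans (RCLike.re_le_norm _) (norm_inner_le_norm _ _)
  have h5 : ‖(star w * w) ζ‖ ≤ ‖ζ‖ := proj_contract _ hq1 hq2 ζ
  nlinarith [norm_nonneg (w ζ), norm_nonneg ζ]

lemma norm_sq_inner (cop : H →L[ℂ] H) (x : H) :
    ‖cop x‖ ^ 2 = RCLike.re (inner ℂ ((star cop * cop) x) x : ℂ) := by
  rw [ContinuousLinearMap.mul_apply, ContinuousLinearMap.star_eq_adjoint,
    ContinuousLinearMap.adjoint_inner_left, inner_self_eq_norm_sq (𝕜 := ℂ)]

lemma orth_lemma (I : Type) (v : I → (H →L[ℂ] H))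
    (hvpi : ∀ i, v i * star (v i) * v i = v i)
    (hvsum : ∀ ξ : H, HasSum (fun i => (star (v i) * v i) ξ) ξ)
    {i k : I} (hik : i ≠ k) :
    (star (v i) * v i) * (star (v k) * v k) = 0 := by
  have he_idem : ∀ i, (star (v i) * v i) * (star (v i) * v i) = star (v i) * v i := by
    intro i
    calc (star (v i) * v i) * (star (v i) * v i)
        = star (v i) * (v i * star (v i) * v i) := by simp only [mul_assoc]
      _ = star (v i) * v i := by rw [hvpi]
  classical
  ext ζ
  set ζ' : H := (star (v k) * v k) ζ with hζ'
  have hsum := hvsum ζ'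
  have hs2 : HasSum (fun i' => RCLike.re (inner ℂ ζ' ((star (v i') * v i') ζ') : ℂ))
      (RCLike.re (inner ℂ ζ' ζ' : ℂ)) := by
    have := hsum.mapL (RCLike.reCLM.comp ((innerSL ℂ ζ').restrictScalars ℝ))
    simpa using this
  have hterm : ∀ i', RCLike.re (inner ℂ ζ' ((star (v i') * v i') ζ') : ℂ) = ‖v i' ζ'‖ ^ 2 := by
    intro i'
    rw [ContinuousLinearMap.mul_apply, ContinuousLinearMap.star_eq_adjoint,
      ContinuousLinearMap.adjoint_inner_right, inner_self_eq_norm_sq (𝕜 := ℂ)]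
  simp only [hterm] at hs2
  have htot : RCLike.re (inner ℂ ζ' ζ' : ℂ) = ‖ζ'‖ ^ 2 := inner_self_eq_norm_sq (𝕜 := ℂ) _
  have hkfix : (star (v k) * v k) ζ' = ζ' := by
    have := congrArg (fun A : H →L[ℂ] H => A ζ) (he_idem k)
    simpa [ContinuousLinearMap.mul_apply, hζ'] using this
  have hkk : ‖v k ζ'‖ ^ 2 = ‖ζ'‖ ^ 2 := by
    rw [← hterm k, hkfix, htot]
  have hle := sum_le_hasSum ({i, k} : Finset I) (fun _ _ => sq_nonneg _) hs2
  rw [Finset.sum_pair hik, htot, hkk] at hle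
  have hvz : v i ζ' = 0 := by
    have h1 : ‖v i ζ'‖ = 0 := by nlinarith [sq_nonneg ‖v i ζ'‖, norm_nonneg (v i ζ')]
    exact norm_eq_zero.mp h1
  show ((star (v i) * v i) * (star (v k) * v k)) ζ = (0 : H →L[ℂ] H) ζ
  rw [ContinuousLinearMap.mul_apply, ContinuousLinearMap.mul_apply, ← hζ', hvz, map_zero,
    ContinuousLinearMap.zero_apply]

set_option maxHeartbeats 2000000 in
/-- with `f ∈ N` of central support `1` in `M` and partial isometries
`{v i} ⊆ N` with `Σ vᵢ* vᵢ = 1`, `vᵢvᵢ* ≤ f`, any `z ∈ Z(N)^ω` such that `zf` commutes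
with `fMf` (in the ultrapower, along the free ultrafilter `ω`) commutes with all of
`M`; i.e. `M'f ∩ Z(N)^ω f = (M' ∩ Z(N)^ω) f`. -/
theorem stmt18 (M N : VonNeumannAlgebra H)
    (hNM : (N : Set (H →L[ℂ] H)) ⊆ (M : Set (H →L[ℂ] H)))
    (f : H →L[ℂ] H) (hf : IsProjectionIn (N : Set (H →L[ℂ] H)) f)
    (hcfM : ∀ z : H →L[ℂ] H, IsProjectionIn (M : Set (H →L[ℂ] H)) z →
      (∀ y ∈ M, z * y = y * z) → f * z = f → z = 1)
    (I : Type) (v : I → (H →L[ℂ] H)) (hvN : ∀ i, v i ∈ N)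
    (hvpi : ∀ i, v i * star (v i) * v i = v i)
    (hvf : ∀ i, f * (v i * star (v i)) = v i * star (v i))
    (hvsum : ∀ ξ : H, HasSum (fun i => (star (v i) * v i) ξ) ξ)
    (ω : Ultrafilter ℕ) (z : ℕ → (H →L[ℂ] H))
    (hzN : ∀ m, z m ∈ N ∧ ∀ y ∈ N, z m * y = y * z m)
    (hzb : ∃ C : ℝ, ∀ m, ‖z m‖ ≤ C)
    (hcomm : ∀ y ∈ M, ∀ ξ : H,
      Filter.Tendsto (fun m => ((z m * f) * (f * y * f) - (f * y * f) * (z m * f)) ξ)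
        (↑ω) (nhds 0)) :
    ∀ y ∈ M, ∀ ξ : H,
      Filter.Tendsto (fun m => ((z m * y - y * z m)) ξ) (↑ω) (nhds 0) := by
  intro y hy ξ
  classical
  obtain ⟨C₀, hC₀⟩ := hzb
  set C : ℝ := max C₀ 0 with hC_def
  have hC : ∀ m, ‖z m‖ ≤ C := fun m => le_trans (hC₀ m) (le_max_left _ _)
  have hC0 : 0 ≤ C := le_max_right _ _
  have hzx : ∀ (m : ℕ) (ζ : H), ‖z m ζ‖ ≤ C * ‖ζ‖ := fun m ζ =>
    le_trans ((z m).le_opNorm ζ) (mul_le_mul_of_nonneg_right (hC m) (norm_nonneg ζ))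
  have hfN : f ∈ N := hf.1
  have hff : f * f = f := hf.2.1
  have hfs : star f = f := hf.2.2
  have hfc : ∀ ζ : H, ‖f ζ‖ ≤ ‖ζ‖ := proj_contract f hff hfs
  have hvc : ∀ (i : I) (ζ : H), ‖v i ζ‖ ≤ ‖ζ‖ := fun i => pisom_contract _ (hvpi i)
  have hvs_pi : ∀ i, star (v i) * star (star (v i)) * star (v i) = star (v i) := by
    intro i
    have := congrArg star (hvpi i)
    simpa [star_mul, star_star, mul_assoc] using this
  have hvsc : ∀ (i : I) (ζ : H), ‖star (v i) ζ‖ ≤ ‖ζ‖ := fun i => pisom_contract _ (hvs_pi i)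
  have hfv : ∀ i, f * v i = v i := by
    intro i
    calc f * v i = f * (v i * star (v i) * v i) := by rw [hvpi]
      _ = f * (v i * star (v i)) * v i := by rw [← mul_assoc]
      _ = v i * star (v i) * v i := by rw [hvf]
      _ = v i := hvpi i
  have hsvf : ∀ i, star (v i) * f = star (v i) := by
    intro i
    have := congrArg star (hfv i)
    rwa [star_mul, hfs] at this
  have hzc : ∀ m, ∀ x ∈ N, z m * x = x * z m := fun m => (hzN m).2
  have hzsv : ∀ (m : ℕ) (i : I), z m * star (v i) = star (v i) * z m :=
    fun m i => hzc m _ (star_mem (hvN i))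
  have horth : ∀ i k : I, i ≠ k → (star (v i) * v i) * (star (v k) * v k) = 0 :=
    fun i k h => orth_lemma I v hvpi hvsum h
  have he_idem : ∀ i, (star (v i) * v i) * (star (v i) * v i) = star (v i) * v i := by
    intro i
    calc (star (v i) * v i) * (star (v i) * v i)
        = star (v i) * (v i * star (v i) * v i) := by simp only [mul_assoc]
      _ = star (v i) * v i := by rw [hvpi]
  have he_sa : ∀ i : I, star (star (v i) * v i) = star (v i) * v i := by
    intro i; simp [star_mul]
  have hPmem : ∀ G : Finset I, (∑ i ∈ G, (star (v i) * v i)) ∈ M := fun G =>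
    sum_mem (fun i _ => hNM (mul_mem (star_mem (hvN i)) (hvN i)))
  have hPP : ∀ G : Finset I, (∑ i ∈ G, (star (v i) * v i)) * (∑ i ∈ G, (star (v i) * v i))
      = ∑ i ∈ G, (star (v i) * v i) := by
    intro G
    rw [Finset.sum_mul_sum]
    refine Finset.sum_congr rfl fun i hi => ?_
    rw [Finset.sum_eq_single i (fun k _ hk => horth i k (Ne.symm hk)) (fun h => absurd hi h)]
    exact he_idem i
  have hQQ : ∀ G : Finset I,
      ((1 : H →L[ℂ] H) - ∑ i ∈ G, (star (v i) * v i)) * (1 - ∑ i ∈ G, (star (v i) * v i))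
        = 1 - ∑ i ∈ G, (star (v i) * v i) := by
    intro G
    have h1 : ((1 : H →L[ℂ] H) - ∑ i ∈ G, (star (v i) * v i)) * (1 - ∑ i ∈ G, (star (v i) * v i))
        = 1 - (∑ i ∈ G, (star (v i) * v i)) - (∑ i ∈ G, (star (v i) * v i))
          + (∑ i ∈ G, (star (v i) * v i)) * (∑ i ∈ G, (star (v i) * v i)) := by noncomm_ring
    rw [h1, hPP]; abel
  have hQsa : ∀ G : Finset I, star ((1 : H →L[ℂ] H) - ∑ i ∈ G, (star (v i) * v i))
      = 1 - ∑ i ∈ G, (star (v i) * v i) := by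
    intro G
    simp [star_sub, star_sum, he_sa]
  have hQnorm : ∀ G : Finset I, ‖(1 : H →L[ℂ] H) - ∑ i ∈ G, (star (v i) * v i)‖ ≤ 1 := fun G =>
    ContinuousLinearMap.opNorm_le_bound _ zero_le_one
      (fun ζ => by rw [one_mul]; exact proj_contract _ (hQQ G) (hQsa G) ζ)
  -- KEY per-j estimate
  have key : ∀ (j : I) (ε : ℝ), 0 < ε →
      ∀ᶠ m in (ω : Filter ℕ),
        ‖z m (y ((star (v j) * v j) ξ)) - y (z m ((star (v j) * v j) ξ))‖ < ε := by
    intro j ε hε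
    set b : H →L[ℂ] H := y * star (v j) with hb_def
    have hbM : b ∈ M := mul_mem hy (star_mem (hNM (hvN j)))
    set ψ : H := y ((star (v j) * v j) ξ) with hψ_def
    have hψb : ψ = b (v j ξ) := by rw [hψ_def, hb_def]; rfl
    have hden1 : (0:ℝ) < 3 * (C + 1) := by linarith
    have hA : (0:ℝ) ≤ C * ‖ξ‖ * (C * ‖b‖ + 1) := by
      have h1 : (0:ℝ) ≤ C * ‖b‖ := mul_nonneg hC0 (norm_nonneg b)
      have h2 : (0:ℝ) ≤ C * ‖ξ‖ := mul_nonneg hC0 (norm_nonneg ξ)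
      nlinarith
    have hden2 : (0:ℝ) < 9 * (C * ‖ξ‖ * (C * ‖b‖ + 1) + 1) := by nlinarith
    set δ : ℝ := min (ε / (3 * (C + 1))) (ε ^ 2 / (9 * (C * ‖ξ‖ * (C * ‖b‖ + 1) + 1))) with hδ_def
    have hδ1 : δ ≤ ε / (3 * (C + 1)) := min_le_left _ _
    have hδ2 : δ ≤ ε ^ 2 / (9 * (C * ‖ξ‖ * (C * ‖b‖ + 1) + 1)) := min_le_right _ _
    have hδpos : 0 < δ := lt_min (div_pos hε hden1) (div_pos (by positivity) hden2)
    obtain ⟨G, hG⟩ : ∃ G : Finset I, ‖ψ - ∑ i ∈ G, (star (v i) * v i) ψ‖ < δ := by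
      have h0 : Filter.Tendsto (fun s : Finset I => ∑ i ∈ s, (star (v i) * v i) ψ)
          Filter.atTop (nhds ψ) := hvsum ψ
      obtain ⟨G, hG⟩ := (Metric.tendsto_nhds.mp h0 δ hδpos).exists
      exact ⟨G, by rwa [dist_eq_norm, norm_sub_rev] at hG⟩
    set PG : H →L[ℂ] H := ∑ i ∈ G, (star (v i) * v i) with hPG_def
    have hGnorm : ‖ψ - PG ψ‖ < δ := by
      have h1 : PG ψ = ∑ i ∈ G, (star (v i) * v i) ψ := by
        rw [hPG_def]; exact ContinuousLinearMap.sum_apply _ _ _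
      rwa [h1]
    set c : H →L[ℂ] H := (1 - PG) * b with hc_def
    have ha'M : star c * c ∈ M := by
      have hcMem : c ∈ M := by
        rw [hc_def, hPG_def]
        exact mul_mem (sub_mem (one_mem M) (hPmem G)) hbM
      exact mul_mem (star_mem hcMem) hcMem
    have hfb : b * f = b := by rw [hb_def, mul_assoc, hsvf]
    have hcf : c * f = c := by rw [hc_def, mul_assoc, hfb]
    have hfcs : f * star c = star c := by
      have := congrArg star hcf
      rwa [star_mul, hfs] at this
    have hfaf : f * (star c * c) * f = star c * c := by
      rw [← mul_assoc, hfcs, mul_assoc, hcf]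
    have hcard : (0:ℝ) < 3 * ((G.card : ℝ) + 1) := by positivity
    have hE1 : ∀ᶠ m in (ω : Filter ℕ), ∀ i ∈ G,
        ‖((z m * f) * (f * (v i * y * star (v j)) * f)
          - (f * (v i * y * star (v j)) * f) * (z m * f)) (v j ξ)‖
          < ε / (3 * ((G.card : ℝ) + 1)) := by
      rw [Filter.eventually_all_finset]
      intro i _
      exact NormedAddCommGroup.tendsto_nhds_zero.mp
        (hcomm _ (mul_mem (mul_mem (hNM (hvN i)) hy) (star_mem (hNM (hvN j)))) (v j ξ))
        _ (div_pos hε hcard)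
    have hE2 : ∀ᶠ m in (ω : Filter ℕ),
        ‖((z m * f) * (f * (star c * c) * f) - (f * (star c * c) * f) * (z m * f)) (v j ξ)‖ < δ :=
      NormedAddCommGroup.tendsto_nhds_zero.mp (hcomm _ ha'M (v j ξ)) δ hδpos
    filter_upwards [hE1, hE2] with m hm1 hm2
    have hw : (z m * f) (v j ξ) = z m (v j ξ) := by
      show z m (f (v j ξ)) = z m (v j ξ)
      congr 1
      show (f * v j) ξ = v j ξ
      rw [hfv]
    have hRHS : y (z m ((star (v j) * v j) ξ)) = b ((z m * f) (v j ξ)) := by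
      rw [hw]
      show y (z m (star (v j) (v j ξ))) = y (star (v j) (z m (v j ξ)))
      congr 1
      show (z m * star (v j)) (v j ξ) = (star (v j) * z m) (v j ξ)
      rw [hzsv]
    have hg : ∀ i : I, f * (v i * y * star (v j)) * f = v i * b := by
      intro i
      rw [hb_def]
      calc f * (v i * y * star (v j)) * f
          = ((f * v i) * y * star (v j)) * f := by simp only [← mul_assoc]
        _ = (v i * y * star (v j)) * f := by rw [hfv]
        _ = v i * y * (star (v j) * f) := by simp only [mul_assoc]
        _ = v i * y * star (v j) := by rw [hsvf]
        _ = v i * (y * star (v j)) := by rw [mul_assoc]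
    have hfvb : ∀ i : I, f * (v i * b) = v i * b := by
      intro i; rw [← mul_assoc, hfv]
    have hop : ∀ i : I,
        z m * ((star (v i) * v i) * b) - ((star (v i) * v i) * b) * (z m * f)
          = star (v i) * ((z m * f) * (f * (v i * y * star (v j)) * f)
            - (f * (v i * y * star (v j)) * f) * (z m * f)) := by
      intro i
      rw [hg i, mul_sub]
      have hright : ((star (v i) * v i) * b) * (z m * f)
          = star (v i) * ((v i * b) * (z m * f)) := by simp only [mul_assoc]
      rw [hright]
      congr 1
      calc z m * ((star (v i) * v i) * b)
          = (z m * star (v i)) * (v i * b) := by simp only [mul_assoc]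
        _ = (star (v i) * z m) * (v i * b) := by rw [hzsv]
        _ = star (v i) * (z m * (v i * b)) := by simp only [mul_assoc]
        _ = star (v i) * ((z m * f) * (v i * b)) := by
            rw [mul_assoc (z m) f (v i * b), hfvb]
    have hsplit : z m ψ - b ((z m * f) (v j ξ))
        = (z m ψ - z m (PG ψ)) + (z m (PG ψ) - PG (b ((z m * f) (v j ξ))))
          + (PG (b ((z m * f) (v j ξ))) - b ((z m * f) (v j ξ))) := by abel
    have ht1 : ‖z m ψ - z m (PG ψ)‖ ≤ C * δ := by
      rw [← map_sub]
      exact le_trans (hzx m _) (mul_le_mul_of_nonneg_left (le_of_lt hGnorm) hC0)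
    have ht2 : ‖z m (PG ψ) - PG (b ((z m * f) (v j ξ)))‖ < ε / 3 := by
      have h1 : z m (PG ψ) = ∑ i ∈ G, (z m * ((star (v i) * v i) * b)) (v j ξ) := by
        rw [hPG_def]
        simp only [ContinuousLinearMap.sum_apply, map_sum]
        exact Finset.sum_congr rfl fun i _ => by rw [hψb]; rfl
      have h2 : PG (b ((z m * f) (v j ξ)))
          = ∑ i ∈ G, (((star (v i) * v i) * b) * (z m * f)) (v j ξ) := by
        rw [hPG_def]
        simp only [ContinuousLinearMap.sum_apply]
        exact Finset.sum_congr rfl fun i _ => rfl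
      have hsum_eq : z m (PG ψ) - PG (b ((z m * f) (v j ξ)))
          = ∑ i ∈ G, (star (v i)) (((z m * f) * (f * (v i * y * star (v j)) * f)
              - (f * (v i * y * star (v j)) * f) * (z m * f)) (v j ξ)) := by
        rw [h1, h2, ← Finset.sum_sub_distrib]
        refine Finset.sum_congr rfl fun i _ => ?_
        have := congrArg (fun A : H →L[ℂ] H => A (v j ξ)) (hop i)
        simpa [ContinuousLinearMap.sub_apply] using this
      rw [hsum_eq]
      have hb1 : ∀ i ∈ G, ‖(star (v i)) (((z m * f) * (f * (v i * y * star (v j)) * f)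
          - (f * (v i * y * star (v j)) * f) * (z m * f)) (v j ξ))‖
          ≤ ε / (3 * ((G.card : ℝ) + 1)) :=
        fun i hi => le_trans (hvsc i _) (le_of_lt (hm1 i hi))
      calc ‖∑ i ∈ G, (star (v i)) (((z m * f) * (f * (v i * y * star (v j)) * f)
            - (f * (v i * y * star (v j)) * f) * (z m * f)) (v j ξ))‖
          ≤ ∑ i ∈ G, ‖(star (v i)) (((z m * f) * (f * (v i * y * star (v j)) * f)
            - (f * (v i * y * star (v j)) * f) * (z m * f)) (v j ξ))‖ := norm_sum_le _ _
        _ ≤ ∑ _i ∈ G, ε / (3 * ((G.card : ℝ) + 1)) := Finset.sum_le_sum hb1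
        _ = (G.card : ℝ) * (ε / (3 * ((G.card : ℝ) + 1))) := by
            rw [Finset.sum_const, nsmul_eq_mul]
        _ < ε / 3 := by
            rw [← mul_div_assoc, div_lt_div_iff₀ hcard (by norm_num : (0:ℝ) < 3)]
            nlinarith [hε, Nat.cast_nonneg (α := ℝ) G.card]
    have ht3 : ‖PG (b ((z m * f) (v j ξ))) - b ((z m * f) (v j ξ))‖ < ε / 3 := by
      have hcv : c ((z m * f) (v j ξ))
          = b ((z m * f) (v j ξ)) - PG (b ((z m * f) (v j ξ))) := by
        rw [hc_def]
        simp [ContinuousLinearMap.mul_apply, ContinuousLinearMap.sub_apply,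
          ContinuousLinearMap.one_apply]
      have heq : PG (b ((z m * f) (v j ξ))) - b ((z m * f) (v j ξ))
          = -(c ((z m * f) (v j ξ))) := by rw [hcv, neg_sub]
      rw [heq, norm_neg]
      have hwnorm : ‖(z m * f) (v j ξ)‖ ≤ C * ‖ξ‖ := by
        calc ‖(z m * f) (v j ξ)‖ = ‖z m (f (v j ξ))‖ := rfl
          _ ≤ C * ‖f (v j ξ)‖ := hzx m _
          _ ≤ C * ‖v j ξ‖ := mul_le_mul_of_nonneg_left (hfc _) hC0
          _ ≤ C * ‖ξ‖ := mul_le_mul_of_nonneg_left (hvc j _) hC0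
      have hsq : ‖c ((z m * f) (v j ξ))‖ ^ 2
          = RCLike.re (inner ℂ ((star c * c) ((z m * f) (v j ξ))) ((z m * f) (v j ξ)) : ℂ) :=
        norm_sq_inner c _
      rw [hfaf] at hm2
      have ha'w : (star c * c) ((z m * f) (v j ξ))
          = (z m * f) ((star c * c) (v j ξ))
            - (((z m * f) * (star c * c) - (star c * c) * (z m * f)) (v j ξ)) := by
        simp only [ContinuousLinearMap.sub_apply, ContinuousLinearMap.mul_apply]
        abel
      have hcvξ : ‖c (v j ξ)‖ < δ := by
        have h3 : c (v j ξ) = ψ - PG ψ := by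
          rw [hc_def]
          simp [ContinuousLinearMap.mul_apply, ContinuousLinearMap.sub_apply,
            ContinuousLinearMap.one_apply, hψb]
        rw [h3]; exact hGnorm
      have hcnorm : ‖c‖ ≤ ‖b‖ := by
        rw [hc_def, hPG_def]
        calc ‖((1 : H →L[ℂ] H) - ∑ i ∈ G, (star (v i) * v i)) * b‖
            ≤ ‖(1 : H →L[ℂ] H) - ∑ i ∈ G, (star (v i) * v i)‖ * ‖b‖ := norm_mul_le _ _
          _ ≤ 1 * ‖b‖ := mul_le_mul_of_nonneg_right (hQnorm G) (norm_nonneg b)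
          _ = ‖b‖ := one_mul _
      have hacv : ‖(star c * c) (v j ξ)‖ ≤ ‖b‖ * δ := by
        calc ‖(star c * c) (v j ξ)‖ = ‖star c (c (v j ξ))‖ := rfl
          _ ≤ ‖star c‖ * ‖c (v j ξ)‖ := (star c).le_opNorm _
          _ ≤ ‖b‖ * δ := by
              rw [norm_star]
              exact mul_le_mul hcnorm (le_of_lt hcvξ) (norm_nonneg _) (norm_nonneg b)
      have hbound1 : ‖(star c * c) ((z m * f) (v j ξ))‖ ≤ C * (‖b‖ * δ) + δ := by
        rw [ha'w]
        refine le_trans (norm_sub_le _ _) (add_le_add ?_ (le_of_lt hm2))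
        calc ‖(z m * f) ((star c * c) (v j ξ))‖ = ‖z m (f ((star c * c) (v j ξ)))‖ := rfl
          _ ≤ C * ‖f ((star c * c) (v j ξ))‖ := hzx m _
          _ ≤ C * ‖(star c * c) (v j ξ)‖ := mul_le_mul_of_nonneg_left (hfc _) hC0
          _ ≤ C * (‖b‖ * δ) := mul_le_mul_of_nonneg_left hacv hC0
      have hfinsq : ‖c ((z m * f) (v j ξ))‖ ^ 2 < ε ^ 2 / 9 := by
        have h6 : RCLike.re (inner ℂ ((star c * c) ((z m * f) (v j ξ))) ((z m * f) (v j ξ)) : ℂ)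
            ≤ ‖(star c * c) ((z m * f) (v j ξ))‖ * ‖(z m * f) (v j ξ)‖ :=
          le_trans (RCLike.re_le_norm _) (norm_inner_le_norm _ _)
        have hpos1 : (0:ℝ) ≤ C * (‖b‖ * δ) + δ :=
          add_nonneg (mul_nonneg hC0 (mul_nonneg (norm_nonneg b) hδpos.le)) hδpos.le
        have h7 : ‖(star c * c) ((z m * f) (v j ξ))‖ * ‖(z m * f) (v j ξ)‖
            ≤ (C * (‖b‖ * δ) + δ) * (C * ‖ξ‖) :=
          mul_le_mul hbound1 hwnorm (norm_nonneg _) hpos1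
        have h8 : δ * (9 * (C * ‖ξ‖ * (C * ‖b‖ + 1) + 1)) ≤ ε ^ 2 := (le_div_iff₀ hden2).mp hδ2
        rw [hsq]
        nlinarith [h6, h7, h8, hδpos, mul_nonneg hC0 (norm_nonneg ξ)]
      nlinarith [norm_nonneg (c ((z m * f) (v j ξ))), hfinsq, hε]
    have hCδ : C * δ ≤ ε / 3 := by
      have h9 : δ * (3 * (C + 1)) ≤ ε := (le_div_iff₀ hden1).mp hδ1
      nlinarith [hδpos.le, hC0]
    calc ‖z m ψ - y (z m ((star (v j) * v j) ξ))‖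
        = ‖z m ψ - b ((z m * f) (v j ξ))‖ := by rw [hRHS]
      _ ≤ ‖z m ψ - z m (PG ψ)‖ + ‖z m (PG ψ) - PG (b ((z m * f) (v j ξ)))‖
          + ‖PG (b ((z m * f) (v j ξ))) - b ((z m * f) (v j ξ))‖ := by
        rw [hsplit]; exact norm_add₃_le
      _ < ε := by linarith [ht1, ht2, ht3, hCδ]
  -- FINAL assembly
  rw [NormedAddCommGroup.tendsto_nhds_zero]
  intro ε hε
  have hden3 : (0:ℝ) < 2 * (2 * C * ‖y‖ + 1) := by
    nlinarith [mul_nonneg hC0 (norm_nonneg y)]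
  obtain ⟨F, hF⟩ : ∃ F : Finset I,
      ‖ξ - ∑ j ∈ F, (star (v j) * v j) ξ‖ < ε / (2 * (2 * C * ‖y‖ + 1)) := by
    have h0 : Filter.Tendsto (fun s : Finset I => ∑ i ∈ s, (star (v i) * v i) ξ)
        Filter.atTop (nhds ξ) := hvsum ξ
    obtain ⟨F, hF⟩ := (Metric.tendsto_nhds.mp h0 _ (div_pos hε hden3)).exists
    exact ⟨F, by rwa [dist_eq_norm, norm_sub_rev] at hF⟩
  have hcardF : (0:ℝ) < 2 * ((F.card : ℝ) + 1) := by positivity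
  have hkeyF : ∀ᶠ m in (ω : Filter ℕ), ∀ j ∈ F,
      ‖z m (y ((star (v j) * v j) ξ)) - y (z m ((star (v j) * v j) ξ))‖
        < ε / (2 * ((F.card : ℝ) + 1)) := by
    rw [Filter.eventually_all_finset]
    exact fun j _ => key j _ (div_pos hε hcardF)
  filter_upwards [hkeyF] with m hm
  have hid : (z m * y - y * z m) ξ
      = (z m (y (ξ - ∑ j ∈ F, (star (v j) * v j) ξ))
          - y (z m (ξ - ∑ j ∈ F, (star (v j) * v j) ξ)))
        + ∑ j ∈ F, (z m (y ((star (v j) * v j) ξ)) - y (z m ((star (v j) * v j) ξ))) := by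
    have e1 : (z m * y - y * z m) ξ = z m (y ξ) - y (z m ξ) := rfl
    rw [e1, Finset.sum_sub_distrib]
    simp only [map_sub, map_sum]
    abel
  rw [hid]
  refine lt_of_le_of_lt (norm_add_le _ _) ?_
  have hb1 : ‖z m (y (ξ - ∑ j ∈ F, (star (v j) * v j) ξ))
      - y (z m (ξ - ∑ j ∈ F, (star (v j) * v j) ξ))‖ ≤ ε / 2 := by
    set u : H := ξ - ∑ j ∈ F, (star (v j) * v j) ξ with hu
    have hu1 : ‖z m (y u)‖ ≤ C * (‖y‖ * ‖u‖) :=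
      le_trans (hzx m _) (mul_le_mul_of_nonneg_left (y.le_opNorm u) hC0)
    have hu2 : ‖y (z m u)‖ ≤ ‖y‖ * (C * ‖u‖) :=
      le_trans (y.le_opNorm _) (mul_le_mul_of_nonneg_left (hzx m u) (norm_nonneg y))
    have hun : ‖u‖ * (2 * (2 * C * ‖y‖ + 1)) ≤ ε := (le_div_iff₀ hden3).mp hF.le
    refine le_trans (norm_sub_le _ _) ?_
    nlinarith [norm_nonneg u, hu1, hu2]
  have hb2 : ‖∑ j ∈ F, (z m (y ((star (v j) * v j) ξ)) - y (z m ((star (v j) * v j) ξ)))‖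
      < ε / 2 := by
    refine lt_of_le_of_lt (norm_sum_le _ _) ?_
    calc ∑ j ∈ F, ‖z m (y ((star (v j) * v j) ξ)) - y (z m ((star (v j) * v j) ξ))‖
        ≤ ∑ _j ∈ F, ε / (2 * ((F.card : ℝ) + 1)) :=
          Finset.sum_le_sum fun j hj => (hm j hj).le
      _ = (F.card : ℝ) * (ε / (2 * ((F.card : ℝ) + 1))) := by
          rw [Finset.sum_const, nsmul_eq_mul]
      _ < ε / 2 := by
          rw [← mul_div_assoc, div_lt_div_iff₀ hcardF (by norm_num : (0:ℝ) < 2)]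
          nlinarith [hε, Nat.cast_nonneg (α := ℝ) F.card]
  linarith [hb1, hb2]
end
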